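/- arXiv:1708.05118 — 8 statements merged into one kernel-verified Lean document; each statement's English description precedes it below -/
import Mathlib

section
/- Let H be a connected constraint graph (possibly with self-loops) on q vertices that is not the complete graph with all self-loops. Then H is identifiable (i.e., any two distinct H-colorable graphs G1, G2 on the same vertex set have different sets of H-colorings) if and only if for every H-colorable graph G = (V,E) and every pair of nonadjacent vertices u, v in V there exists an H-coloring sigma of G such that {sigma(u), sigma(v)} is not an edge of H. -/
/-- An `H`-coloring of a graph `G` is a map to the colors `Fin q` such that
adjacent vertices of `G` receive `H`-adjacent colors. -/
def IsHColoring {q : ℕ} (H : Fin q → Fin q → Prop) {V : Type} (G : SimpleGraph V)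
    (σ : V → Fin q) : Prop :=
  ∀ u v : V, G.Adj u v → H (σ u) (σ v)

/-- A connected constraint graph `H` (possibly with self-loops) which is not the complete
looped graph is identifiable iff for every `H`-colorable graph `G` and every pair of
nonadjacent vertices `u, v` there is an `H`-coloring of `G` giving `u, v` incompatible colors. -/
theorem stmt0 (q : ℕ) (H : Fin q → Fin q → Prop)
    (hsymm : Symmetric H)
    (hconn : ∀ i j : Fin q, Relation.ReflTransGen H i j)
    (hne : ∃ i j : Fin q, ¬ H i j) :
    (∀ (V : Type) [Fintype V] (G₁ G₂ : SimpleGraph V),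
        (∃ σ, IsHColoring H G₁ σ) → (∃ σ, IsHColoring H G₂ σ) →
        {σ | IsHColoring H G₁ σ} = {σ | IsHColoring H G₂ σ} → G₁ = G₂)
    ↔
    (∀ (V : Type) [Fintype V] (G : SimpleGraph V),
        (∃ σ, IsHColoring H G σ) →
        ∀ u v : V, u ≠ v → ¬ G.Adj u v →
          ∃ σ, IsHColoring H G σ ∧ ¬ H (σ u) (σ v)) := by
  constructor
  · -- identifiable → separating colorings exist
    intro hid V _ G hcol u v huv hadj
    by_contra hc
    push_neg at hc
    -- every H-coloring of G gives H-compatible colors to u,v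
    have hc' : ∀ σ, IsHColoring H G σ → H (σ u) (σ v) := fun σ hσ => hc σ hσ
    -- G' : G with edge {u,v} added
    let G' : SimpleGraph V :=
      { Adj := fun a b => G.Adj a b ∨ (a = u ∧ b = v) ∨ (a = v ∧ b = u)
        symm := by
          constructor
          intro a b hab
          rcases hab with h | ⟨h1, h2⟩ | ⟨h1, h2⟩
          · exact Or.inl h.symm
          · exact Or.inr (Or.inr ⟨h2, h1⟩)
          · exact Or.inr (Or.inl ⟨h2, h1⟩)
        loopless := by
          constructor
          intro a ha
          rcases ha with h | ⟨h1, h2⟩ | ⟨h1, h2⟩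
          · exact G.irrefl h
          · exact huv (h1 ▸ h2 ▸ rfl)
          · exact huv (h2 ▸ h1 ▸ rfl) }
    have hiff : ∀ σ, IsHColoring H G' σ ↔ IsHColoring H G σ := by
      intro σ
      constructor
      · intro h a b hab; exact h a b (Or.inl hab)
      · intro h a b hab
        rcases hab with hab | ⟨h1, h2⟩ | ⟨h1, h2⟩
        · exact h a b hab
        · subst h1; subst h2; exact hc' σ h
        · subst h1; subst h2; exact hsymm (hc' σ h)
    obtain ⟨σ0, hσ0⟩ := hcol
    have heq : G = G' := by
      apply hid V G G' ⟨σ0, hσ0⟩ ⟨σ0, (hiff σ0).mpr hσ0⟩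
      ext σ
      simp only [Set.mem_setOf_eq]
      exact (hiff σ).symm
    have : G.Adj u v := by
      rw [heq]
      exact Or.inr (Or.inl ⟨rfl, rfl⟩)
    exact hadj this
  · -- separating colorings → identifiable
    intro hsep V _ G₁ G₂ hcol₁ hcol₂ hset
    have key : ∀ (A B : SimpleGraph V), (∃ σ, IsHColoring H B σ) →
        {σ | IsHColoring H A σ} = {σ | IsHColoring H B σ} →
        ∀ a b, A.Adj a b → B.Adj a b := by
      intro A B hcolB hAB a b hab
      by_contra hnadj
      obtain ⟨σ, hσ, hH⟩ := hsep V B hcolB a b (A.ne_of_adj hab) hnadj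
      have : σ ∈ {σ | IsHColoring H A σ} := hAB ▸ hσ
      exact hH (this a b hab)
    ext a b
    exact ⟨fun h => key G₁ G₂ hcol₂ hset a b h,
           fun h => key G₂ G₁ hcol₁ hset.symm a b h⟩
end

section
/- Suppose that for every edge {i,j} of a loopless connected constraint graph H there exists an H-coloring tau of the supergraph G_{ij} in which the duplicate vertices i' and j' receive incompatible colors. Then for every H-colorable graph G and every H-coloring sigma of G and every pair of nonadjacent vertices u, v of G with a = sigma(u), b = sigma(v) compatible, the map sigma' defined by sigma'(w) = tau(sigma(w)) for w not in {u,v}, sigma'(u) = tau(a'), sigma'(v) = tau(b') (where tau is an H-coloring of G_{ab} with tau(a'), tau(b') incompatible) is a valid H-coloring of G in which u and v receive incompatible colors. -/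
/-- Adjacency of the supergraph `G_{ij}` of `H`: vertices are the colors of `H` together
with duplicates `i' = inr false` and `j' = inr true` of `i` and `j`; the duplicates have
the same neighborhoods as the originals except that the edge `{i', j'}` is absent. -/
def GijAdj {q : ℕ} (H : Fin q → Fin q → Prop) (i j : Fin q) :
    (Fin q ⊕ Bool) → (Fin q ⊕ Bool) → Prop
  | Sum.inl a, Sum.inl b => H a b
  | Sum.inl a, Sum.inr c => H (if c then j else i) a
  | Sum.inr c, Sum.inl a => H (if c then j else i) a
  | Sum.inr _, Sum.inr _ => False

/-- If for every edge `{i,j}` of the loopless connected constraint graph `H` there is an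
`H`-coloring of `G_{ij}` giving `i', j'` incompatible colors, then for any `H`-coloring `σ`
of a graph `G` and nonadjacent `u, v` with compatible colors `a = σ u`, `b = σ v`,
recoloring through any such coloring `τ` of `G_{ab}` yields a valid `H`-coloring of `G`
in which `u` and `v` receive incompatible colors. -/
theorem stmt3 (q : ℕ) (H : Fin q → Fin q → Prop)
    (hsymm : Symmetric H) (hloopless : ∀ a : Fin q, ¬ H a a)
    (hconn : ∀ a b : Fin q, Relation.ReflTransGen H a b)
    (hdup : ∀ i j : Fin q, H i j →
      ∃ τ : (Fin q ⊕ Bool) → Fin q,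
        (∀ a b, GijAdj H i j a b → H (τ a) (τ b)) ∧
        ¬ H (τ (Sum.inr false)) (τ (Sum.inr true)))
    (V : Type) [DecidableEq V] (G : SimpleGraph V) (σ : V → Fin q)
    (hσ : IsHColoring H G σ)
    (u v : V) (huv : u ≠ v) (hnadj : ¬ G.Adj u v)
    (hab : H (σ u) (σ v))
    (τ : (Fin q ⊕ Bool) → Fin q)
    (hτ : ∀ a b, GijAdj H (σ u) (σ v) a b → H (τ a) (τ b))
    (hτinc : ¬ H (τ (Sum.inr false)) (τ (Sum.inr true))) :
    IsHColoring H G (fun w =>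
      if w = u then τ (Sum.inr false)
      else if w = v then τ (Sum.inr true)
      else τ (Sum.inl (σ w))) ∧
    ¬ H ((fun w : V =>
      if w = u then τ (Sum.inr false)
      else if w = v then τ (Sum.inr true)
      else τ (Sum.inl (σ w))) u)
        ((fun w : V =>
      if w = u then τ (Sum.inr false)
      else if w = v then τ (Sum.inr true)
      else τ (Sum.inl (σ w))) v) := by
  constructor
  · intro x y hxy
    have hne : x ≠ y := G.ne_of_adj hxy
    have hH : H (σ x) (σ y) := hσ x y hxy
    simp only
    split_ifs with h1 h2 h3 h4 h5 h6 h7 h8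
    · exact absurd (h1 ▸ h2 ▸ hH) (hloopless _)
    · exact absurd (h1 ▸ h3 ▸ hxy) hnadj
    · exact hτ (Sum.inr false) (Sum.inl (σ y)) (h1 ▸ hH)
    · exact absurd (G.adj_symm (h4 ▸ h5 ▸ hxy)) hnadj
    · exact absurd (h4 ▸ h6 ▸ hH) (hloopless _)
    · exact hτ (Sum.inr true) (Sum.inl (σ y)) (h4 ▸ hH)
    · exact hτ (Sum.inl (σ x)) (Sum.inr false) (hsymm (h7 ▸ hH))
    · exact hτ (Sum.inl (σ x)) (Sum.inr true) (hsymm (h8 ▸ hH))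
    · exact hτ (Sum.inl (σ x)) (Sum.inl (σ y)) hH
  · simpa [Ne.symm huv] using hτinc
end

section
/- Let H be a fixed constraint graph and G_hat_1, ..., G_hat_r distinct H-colorable graphs on the same vertex set such that G_hat_1 is a subgraph of every G_hat_i and G_hat_r is a supergraph of every G_hat_i, and H is identifiable with respect to this family. Let eta = 1 - |Omega(G_hat_r)| / |Omega(G_hat_1)|, where Omega(G) denotes the set of H-colorings of G. If an algorithm, given L i.i.d. samples from the uniform distribution over Omega(G*) for any G* in the family, outputs G* with probability at least 1/r + alpha for some alpha > 0, then L >= alpha / eta. -/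
open scoped Classical

/-- Sample-complexity lower bound: for a nested family `Gs 0 ⊆ Gs i ⊆ Gs (last)` of
distinct `H`-colorable graphs with pairwise distinct sets of `H`-colorings, any
(randomized) structure learning algorithm `A` that, given `L` i.i.d. uniform
`H`-colorings of any `Gs i`, outputs `i` with probability at least `1/(r+1) + α`,
must satisfy `L ≥ α / η` where `η = 1 - |Ω(G_last)| / |Ω(G_0)|`. -/
theorem stmt4 (q r L : ℕ) (H : Fin q → Fin q → Prop)
    (V : Type) [Fintype V] [DecidableEq V]
    (Gs : Fin (r + 1) → SimpleGraph V)
    (hsub : ∀ i, Gs 0 ≤ Gs i ∧ Gs i ≤ Gs (Fin.last r))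
    (hcol : ∀ i, ∃ σ, IsHColoring H (Gs i) σ)
    (hid : ∀ i j : Fin (r + 1),
      {σ | IsHColoring H (Gs i) σ} = {σ | IsHColoring H (Gs j) σ} → i = j)
    (Ω : Fin (r + 1) → Finset (V → Fin q))
    (hΩ : ∀ i, Ω i = Finset.univ.filter (fun σ => IsHColoring H (Gs i) σ))
    (A : (Fin L → (V → Fin q)) → Fin (r + 1) → ℝ)
    (hA0 : ∀ x i, 0 ≤ A x i) (hA1 : ∀ x, ∑ i, A x i = 1)
    (α : ℝ) (hα : 0 < α)
    (hsucc : ∀ i : Fin (r + 1),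
      (1 : ℝ) / (r + 1) + α ≤
        ∑ x : Fin L → (V → Fin q),
          (if ∀ k, x k ∈ Ω i then (((Ω i).card : ℝ) ^ L)⁻¹ * A x i else 0))
    (η : ℝ)
    (hη : η = 1 - ((Ω (Fin.last r)).card : ℝ) / ((Ω 0).card : ℝ)) :
    (L : ℝ) ≥ α / η := by
  -- monotonicity of coloring sets
  have hmono : ∀ i j : Fin (r + 1), Gs i ≤ Gs j → Ω j ⊆ Ω i := by
    intro i j hij σ hσ
    rw [hΩ] at hσ ⊢
    simp only [Finset.mem_filter, Finset.mem_univ, true_and] at hσ ⊢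
    exact fun u v h => hσ u v (hij h)
  have hsubΩ : ∀ i, Ω (Fin.last r) ⊆ Ω i := fun i => hmono i _ (hsub i).2
  have hsubΩ0 : ∀ i, Ω i ⊆ Ω 0 := fun i => hmono 0 i (hsub i).1
  have hpos : ∀ i, 0 < ((Ω i).card : ℝ) := by
    intro i
    obtain ⟨σ, hσ⟩ := hcol i
    have : σ ∈ Ω i := by rw [hΩ]; simp [hσ]
    exact_mod_cast Finset.card_pos.2 ⟨σ, this⟩
  set Nr : ℝ := ((Ω (Fin.last r)).card : ℝ) with hNr
  set N0 : ℝ := ((Ω 0).card : ℝ) with hN0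
  have hNrpos : 0 < Nr := hpos _
  have hN0pos : 0 < N0 := hpos _
  have hNrN0 : Nr ≤ N0 := by rw [hNr, hN0]; exact_mod_cast Finset.card_le_card (hsubΩ0 _)
  -- sets of sample vectors
  set T : Fin (r + 1) → Finset (Fin L → (V → Fin q)) :=
    fun i => Finset.univ.filter (fun x => ∀ k, x k ∈ Ω i) with hT
  have hTcard : ∀ i, ((T i).card : ℝ) = ((Ω i).card : ℝ) ^ L := by
    intro i
    have : T i = Fintype.piFinset (fun _ : Fin L => Ω i) := by
      ext x; simp [hT, Fintype.mem_piFinset]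
    rw [this, Fintype.card_piFinset]
    push_cast [Finset.prod_const]
    simp
  have hTsub : ∀ i, T (Fin.last r) ⊆ T i := by
    intro i x hx
    simp only [hT, Finset.mem_filter, Finset.mem_univ, true_and] at hx ⊢
    exact fun k => hsubΩ i (hx k)
  -- rewrite the success probabilities
  have hS : ∀ i, ∑ x : Fin L → (V → Fin q),
      (if ∀ k, x k ∈ Ω i then (((Ω i).card : ℝ) ^ L)⁻¹ * A x i else 0)
      = (((Ω i).card : ℝ) ^ L)⁻¹ * ∑ x ∈ T i, A x i := by
    intro i
    rw [Finset.mul_sum, hT]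
    rw [Finset.sum_filter]
  -- per-i bound
  have key : ∀ i, (((Ω i).card : ℝ) ^ L)⁻¹ * ∑ x ∈ T i, A x i
      ≤ (Nr ^ L)⁻¹ * (∑ x ∈ T (Fin.last r), A x i) + (1 - Nr ^ L / N0 ^ L) := by
    intro i
    have hNi : 0 < ((Ω i).card : ℝ) := hpos i
    have hNiL : 0 < ((Ω i).card : ℝ) ^ L := pow_pos hNi L
    have hsplit : ∑ x ∈ T i, A x i
        = ∑ x ∈ T (Fin.last r), A x i + ∑ x ∈ T i \ T (Fin.last r), A x i := by
      rw [add_comm, Finset.sum_sdiff (hTsub i)]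
    rw [hsplit, mul_add]
    gcongr ?_ + ?_
    · have hs : 0 ≤ ∑ x ∈ T (Fin.last r), A x i :=
        Finset.sum_nonneg fun x _ => hA0 x i
      have hle : Nr ^ L ≤ ((Ω i).card : ℝ) ^ L := by
        have : Nr ≤ ((Ω i).card : ℝ) := by
          rw [hNr]; exact_mod_cast Finset.card_le_card (hsubΩ i)
        exact pow_le_pow_left₀ hNrpos.le this L
      exact mul_le_mul_of_nonneg_right
        (inv_anti₀ (pow_pos hNrpos L) hle) hs
    · have hcb : ∑ x ∈ T i \ T (Fin.last r), A x i ≤ ((T i \ T (Fin.last r)).card : ℝ) := by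
        calc ∑ x ∈ T i \ T (Fin.last r), A x i ≤ ∑ x ∈ T i \ T (Fin.last r), 1 := by
              refine Finset.sum_le_sum fun x _ => ?_
              have h1 := hA1 x
              have : A x i ≤ ∑ j, A x j :=
                Finset.single_le_sum (fun j _ => hA0 x j) (Finset.mem_univ i)
              linarith
          _ = ((T i \ T (Fin.last r)).card : ℝ) := by simp
      have hcard : ((T i \ T (Fin.last r)).card : ℝ)
          = ((Ω i).card : ℝ) ^ L - Nr ^ L := by
        rw [Finset.card_sdiff_of_subset (hTsub i)]
        have h1 : (T (Fin.last r)).card ≤ (T i).card := Finset.card_le_card (hTsub i)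
        push_cast [h1]
        rw [hTcard, hTcard]
      have : (((Ω i).card : ℝ) ^ L)⁻¹ * ∑ x ∈ T i \ T (Fin.last r), A x i
          ≤ (((Ω i).card : ℝ) ^ L)⁻¹ * (((Ω i).card : ℝ) ^ L - Nr ^ L) := by
        apply mul_le_mul_of_nonneg_left _ (inv_nonneg.2 hNiL.le)
        rw [← hcard]; exact hcb
      refine this.trans ?_
      rw [mul_sub, inv_mul_cancel₀ hNiL.ne']
      have hN0le : (N0 ^ L)⁻¹ ≤ (((Ω i).card : ℝ) ^ L)⁻¹ := by
        apply inv_anti₀ hNiL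
        have : ((Ω i).card : ℝ) ≤ N0 := by
          rw [hN0]; exact_mod_cast Finset.card_le_card (hsubΩ0 i)
        exact pow_le_pow_left₀ hNi.le this L
      have : (((Ω i).card : ℝ) ^ L)⁻¹ * Nr ^ L ≥ (N0 ^ L)⁻¹ * Nr ^ L :=
        mul_le_mul_of_nonneg_right hN0le (pow_pos hNrpos L).le
      have hdiv : Nr ^ L / N0 ^ L = (N0 ^ L)⁻¹ * Nr ^ L := by ring
      rw [hdiv]; linarith
  -- sum over i
  have hsum : (1 : ℝ) + (r + 1) * α ≤ 1 + (r + 1) * (1 - Nr ^ L / N0 ^ L) := by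
    have hL : ∑ i : Fin (r + 1), ((1 : ℝ) / (r + 1) + α)
        ≤ ∑ i, (((Ω i).card : ℝ) ^ L)⁻¹ * ∑ x ∈ T i, A x i := by
      refine Finset.sum_le_sum fun i _ => ?_
      rw [← hS i]; exact hsucc i
    have hR : ∑ i, (((Ω i).card : ℝ) ^ L)⁻¹ * ∑ x ∈ T i, A x i
        ≤ 1 + (r + 1) * (1 - Nr ^ L / N0 ^ L) := by
      calc ∑ i, (((Ω i).card : ℝ) ^ L)⁻¹ * ∑ x ∈ T i, A x i
          ≤ ∑ i, ((Nr ^ L)⁻¹ * (∑ x ∈ T (Fin.last r), A x i) + (1 - Nr ^ L / N0 ^ L)) :=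
            Finset.sum_le_sum fun i _ => key i
        _ = (Nr ^ L)⁻¹ * ∑ x ∈ T (Fin.last r), ∑ i, A x i
            + (r + 1) * (1 - Nr ^ L / N0 ^ L) := by
            rw [Finset.sum_add_distrib, ← Finset.mul_sum, Finset.sum_comm]
            simp [mul_comm]
            ring
        _ = 1 + (r + 1) * (1 - Nr ^ L / N0 ^ L) := by
            have : ∑ x ∈ T (Fin.last r), ∑ i, A x i = (T (Fin.last r)).card := by
              rw [Finset.sum_congr rfl fun x _ => hA1 x]; simp
            rw [this, hTcard]
            rw [inv_mul_cancel₀ (pow_pos hNrpos L).ne']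
    have hLsum : ∑ i : Fin (r + 1), ((1 : ℝ) / (r + 1) + α) = 1 + (r + 1) * α := by
      rw [Finset.sum_const, Finset.card_univ, Fintype.card_fin]
      have : ((r : ℝ) + 1) ≠ 0 := by positivity
      simp only [nsmul_eq_mul]; push_cast
      rw [mul_add, mul_one_div_cancel this]
    linarith [hL.trans hR, hLsum ▸ hL.trans hR]
  have hr1 : (0 : ℝ) < (r : ℝ) + 1 := by positivity
  have hαle : α ≤ 1 - Nr ^ L / N0 ^ L := by
    nlinarith
  -- Bernoulli
  have hratio : Nr ^ L / N0 ^ L = (Nr / N0) ^ L := by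
    rw [div_pow]
  have hbern : 1 - (Nr / N0) ^ L ≤ L * (1 - Nr / N0) := by
    have h := one_add_mul_le_pow (a := Nr / N0 - 1) (by
      have : 0 ≤ Nr / N0 := div_nonneg hNrpos.le hN0pos.le
      linarith) L
    have : (1 : ℝ) + L * (Nr / N0 - 1) ≤ (Nr / N0) ^ L := by
      simpa using h
    nlinarith
  have hαLη : α ≤ L * η := by
    rw [hη]
    calc α ≤ 1 - Nr ^ L / N0 ^ L := hαle
      _ = 1 - (Nr / N0) ^ L := by rw [hratio]
      _ ≤ L * (1 - Nr / N0) := hbern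
  have hηnn : 0 ≤ η := by
    rw [hη]
    have : Nr / N0 ≤ 1 := div_le_one_of_le₀ hNrN0 hN0pos.le
    linarith
  rcases eq_or_lt_of_le hηnn with h0 | hηpos
  · exfalso
    rw [← h0, mul_zero] at hαLη
    linarith
  · rw [ge_iff_le, div_le_iff₀ hηpos]
    linarith [hαLη]
end

section
/- Let G be a graph of maximum degree at most d with q >= d+1 colors. Remove two nonadjacent vertices u, v to form G', and for a color c and nonnegative integers s, t let A(c,s,t) denote the set of proper q-colorings of G' in which color c appears exactly s times in the neighborhood of u (in G) and exactly t times in the neighborhood of v (in G). Then |A(c,0,0)| >= |A(c,s,t)| / d^{s+t}. -/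
/-- `A(c,s,t)`: proper `q`-colorings of the induced subgraph `G' = G - {u,v}` in which
color `c` appears exactly `s` times in `N(u)` and exactly `t` times in `N(v)`. -/
def Aset (q : ℕ) {V : Type} (G : SimpleGraph V) (u v : V) (c : Fin q) (s t : ℕ) :
    Set ({w : V // w ≠ u ∧ w ≠ v} → Fin q) :=
  {σ | (∀ a b : {w : V // w ≠ u ∧ w ≠ v}, G.Adj ↑a ↑b → σ a ≠ σ b) ∧
    {w : {w : V // w ≠ u ∧ w ≠ v} | G.Adj u ↑w ∧ σ w = c}.ncard = s ∧
    {w : {w : V // w ≠ u ∧ w ≠ v} | G.Adj v ↑w ∧ σ w = c}.ncard = t}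

lemma ncard_setOf_eq_card_filter {α : Type*} [Fintype α] (p : α → Prop) [DecidablePred p] :
    {x | p x}.ncard = (Finset.univ.filter p).card := by
  rw [← Set.ncard_coe_finset]; congr 1; ext x; simp

open Classical in
/-- A color different from `c` and from all colors on the `G'`-neighborhood of `w`,
when such a color exists. -/
noncomputable def pick (q : ℕ) {V : Type} (G : SimpleGraph V) (u v : V) (c : Fin q)
    (σ : {w : V // w ≠ u ∧ w ≠ v} → Fin q) (w : {w : V // w ≠ u ∧ w ≠ v}) : Fin q :=
  if h : ∃ a : Fin q, a ≠ c ∧ ∀ x : {w : V // w ≠ u ∧ w ≠ v}, G.Adj ↑w ↑x → a ≠ σ x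
  then h.choose else c

lemma pick_spec {q d : ℕ} {V : Type} [Fintype V] {G : SimpleGraph V}
    (hdeg : ∀ w : V, (G.neighborSet w).ncard ≤ d) (hq : d + 1 ≤ q)
    {u v : V} (c : Fin q) (σ : {w : V // w ≠ u ∧ w ≠ v} → Fin q)
    (w : {w : V // w ≠ u ∧ w ≠ v}) (hw : G.Adj u ↑w ∨ G.Adj v ↑w) :
    pick q G u v c σ w ≠ c ∧
      ∀ x : {w : V // w ≠ u ∧ w ≠ v}, G.Adj ↑w ↑x → pick q G u v c σ w ≠ σ x := by
  obtain ⟨z, hzx, hzw⟩ : ∃ z : V, (∀ x : {w : V // w ≠ u ∧ w ≠ v}, (x : V) ≠ z) ∧ G.Adj z ↑w := by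
    rcases hw with h | h
    · exact ⟨u, fun x => x.2.1, h⟩
    · exact ⟨v, fun x => x.2.2, h⟩
  have hzmem : z ∈ G.neighborSet (↑w : V) := hzw.symm
  have h : ∃ a : Fin q, a ≠ c ∧ ∀ x : {w : V // w ≠ u ∧ w ≠ v}, G.Adj ↑w ↑x → a ≠ σ x := by
    set N : Set {w : V // w ≠ u ∧ w ≠ v} := {x | G.Adj ↑w ↑x} with hN
    set B : Set (Fin q) := insert c (σ '' N) with hB
    have h1 : N.ncard ≤ (G.neighborSet (↑w : V) \ {z}).ncard := by
      refine Set.ncard_le_ncard_of_injOn (fun x => (↑x : V)) ?_ ?_ (Set.toFinite _)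
      · intro x hx; exact ⟨hx, hzx x⟩
      · exact fun a _ b _ hab => Subtype.ext hab
    have h2 : (G.neighborSet (↑w : V) \ {z}).ncard = (G.neighborSet (↑w : V)).ncard - 1 :=
      Set.ncard_diff_singleton_of_mem hzmem
    have h3 : 1 ≤ (G.neighborSet (↑w : V)).ncard :=
      (Set.ncard_pos (Set.toFinite _)).2 ⟨z, hzmem⟩
    have hBcard : B.ncard < q := by
      have e1 : B.ncard ≤ (σ '' N).ncard + 1 := Set.ncard_insert_le c (σ '' N)
      have e2 : (σ '' N).ncard ≤ N.ncard := Set.ncard_image_le (Set.toFinite _)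
      have : B.ncard ≤ (G.neighborSet (↑w : V)).ncard := by omega
      exact lt_of_le_of_lt (this.trans (hdeg _)) (by omega)
    by_contra hcon
    push_neg at hcon
    have hBuniv : B = Set.univ := by
      ext a
      simp only [Set.mem_univ, iff_true, hB]
      rcases eq_or_ne a c with rfl | hac
      · exact Set.mem_insert _ _
      · obtain ⟨x, hx1, hx2⟩ := hcon a hac
        exact Set.mem_insert_of_mem _ ⟨x, hx1, hx2.symm⟩
    rw [hBuniv, Set.ncard_univ, Nat.card_eq_fintype_card, Fintype.card_fin] at hBcard
    omega
  unfold pick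
  rw [dif_pos h]
  exact ⟨h.choose_spec.1, h.choose_spec.2⟩

open Classical in
/-- The recoloring map: every `c`-colored neighbor of `u` or `v` gets a fresh color. -/
noncomputable def Fmap (q : ℕ) {V : Type} (G : SimpleGraph V) (u v : V) (c : Fin q)
    (σ : {w : V // w ≠ u ∧ w ≠ v} → Fin q) : {w : V // w ≠ u ∧ w ≠ v} → Fin q :=
  fun w => if (G.Adj u ↑w ∨ G.Adj v ↑w) ∧ σ w = c then pick q G u v c σ w else σ w

lemma Fmap_pos {q : ℕ} {V : Type} {G : SimpleGraph V} {u v : V} {c : Fin q}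
    {σ : {w : V // w ≠ u ∧ w ≠ v} → Fin q} {w : {w : V // w ≠ u ∧ w ≠ v}}
    (hw : (G.Adj u ↑w ∨ G.Adj v ↑w) ∧ σ w = c) :
    Fmap q G u v c σ w = pick q G u v c σ w := by
  unfold Fmap; exact if_pos hw

lemma Fmap_neg {q : ℕ} {V : Type} {G : SimpleGraph V} {u v : V} {c : Fin q}
    {σ : {w : V // w ≠ u ∧ w ≠ v} → Fin q} {w : {w : V // w ≠ u ∧ w ≠ v}}
    (hw : ¬ ((G.Adj u ↑w ∨ G.Adj v ↑w) ∧ σ w = c)) :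
    Fmap q G u v c σ w = σ w := by
  unfold Fmap; exact if_neg hw

lemma Fmap_mem {q d : ℕ} {V : Type} [Fintype V] {G : SimpleGraph V}
    (hdeg : ∀ w : V, (G.neighborSet w).ncard ≤ d) (hq : d + 1 ≤ q)
    {u v : V} {c : Fin q} {s t : ℕ} {σ : {w : V // w ≠ u ∧ w ≠ v} → Fin q}
    (hσ : σ ∈ Aset q G u v c s t) : Fmap q G u v c σ ∈ Aset q G u v c 0 0 := by
  obtain ⟨hprop, hs, ht⟩ := hσ
  refine ⟨?_, ?_, ?_⟩
  · intro a b hab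
    by_cases ha : (G.Adj u ↑a ∨ G.Adj v ↑a) ∧ σ a = c <;>
      by_cases hb : (G.Adj u ↑b ∨ G.Adj v ↑b) ∧ σ b = c
    · exact absurd (ha.2.trans hb.2.symm) (hprop a b hab)
    · rw [Fmap_pos ha, Fmap_neg hb]
      exact (pick_spec hdeg hq c σ a ha.1).2 b hab
    · rw [Fmap_neg ha, Fmap_pos hb]
      exact fun h => (pick_spec hdeg hq c σ b hb.1).2 a hab.symm h.symm
    · rw [Fmap_neg ha, Fmap_neg hb]; exact hprop a b hab
  · have he : {w : {w : V // w ≠ u ∧ w ≠ v} | G.Adj u ↑w ∧ Fmap q G u v c σ w = c} = ∅ := by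
      ext w
      simp only [Set.mem_setOf_eq, Set.mem_empty_iff_false, iff_false, not_and]
      intro hadj hc
      by_cases hw : (G.Adj u ↑w ∨ G.Adj v ↑w) ∧ σ w = c
      · rw [Fmap_pos hw] at hc
        exact (pick_spec hdeg hq c σ w hw.1).1 hc
      · rw [Fmap_neg hw] at hc
        exact hw ⟨Or.inl hadj, hc⟩
    rw [he, Set.ncard_empty]
  · have he : {w : {w : V // w ≠ u ∧ w ≠ v} | G.Adj v ↑w ∧ Fmap q G u v c σ w = c} = ∅ := by
      ext w
      simp only [Set.mem_setOf_eq, Set.mem_empty_iff_false, iff_false, not_and]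
      intro hadj hc
      by_cases hw : (G.Adj u ↑w ∨ G.Adj v ↑w) ∧ σ w = c
      · rw [Fmap_pos hw] at hc
        exact (pick_spec hdeg hq c σ w hw.1).1 hc
      · rw [Fmap_neg hw] at hc
        exact hw ⟨Or.inr hadj, hc⟩
    rw [he, Set.ncard_empty]

/-- With max degree at most `d` and `q ≥ d+1` colors, removing nonadjacent `u, v`,
one has `|A(c,0,0)| ≥ |A(c,s,t)| / d^{s+t}`. -/
theorem stmt8 (q d : ℕ) (V : Type) [Fintype V] (G : SimpleGraph V)
    (hdeg : ∀ w : V, (G.neighborSet w).ncard ≤ d)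
    (hq : d + 1 ≤ q)
    (u v : V) (huv : u ≠ v) (hnadj : ¬ G.Adj u v)
    (c : Fin q) (s t : ℕ) :
    ((Aset q G u v c 0 0).ncard : ℝ) ≥
      ((Aset q G u v c s t).ncard : ℝ) / (d : ℝ) ^ (s + t) := by
  classical
  have key : (Aset q G u v c s t).ncard ≤ d ^ (s + t) * (Aset q G u v c 0 0).ncard := by
    set T := {w : V // w ≠ u ∧ w ≠ v}
    have hfinA : (Aset q G u v c s t).Finite := Set.toFinite _
    have hfinB : (Aset q G u v c 0 0).Finite := Set.toFinite _
    rw [Set.ncard_eq_toFinset_card _ hfinA, Set.ncard_eq_toFinset_card _ hfinB]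
    set A : Finset (T → Fin q) := hfinA.toFinset with hA
    set B : Finset (T → Fin q) := hfinB.toFinset with hB
    set Nu : Finset T := Finset.univ.filter (fun w => G.Adj u ↑w) with hNu
    set Nv : Finset T := Finset.univ.filter (fun w => G.Adj v ↑w) with hNv
    have hNud : Nu.card ≤ d := by
      have h1 : ((Nu : Set T)).ncard ≤ (G.neighborSet u).ncard := by
        refine Set.ncard_le_ncard_of_injOn (fun x => (↑x : V)) ?_ ?_ (Set.toFinite _)
        · intro x hx
          simp only [hNu, Finset.coe_filter, Finset.mem_univ, true_and,
            Set.mem_setOf_eq] at hx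
          exact hx
        · exact fun a _ b _ hab => Subtype.ext hab
      rw [Set.ncard_coe_finset] at h1
      exact h1.trans (hdeg u)
    have hNvd : Nv.card ≤ d := by
      have h1 : ((Nv : Set T)).ncard ≤ (G.neighborSet v).ncard := by
        refine Set.ncard_le_ncard_of_injOn (fun x => (↑x : V)) ?_ ?_ (Set.toFinite _)
        · intro x hx
          simp only [hNv, Finset.coe_filter, Finset.mem_univ, true_and,
            Set.mem_setOf_eq] at hx
          exact hx
        · exact fun a _ b _ hab => Subtype.ext hab
      rw [Set.ncard_coe_finset] at h1
      exact h1.trans (hdeg v)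
    have hfiber : ∀ σ' ∈ A.image (Fmap q G u v c),
        (A.filter (fun σ => Fmap q G u v c σ = σ')).card ≤ d ^ s * d ^ t := by
      intro σ' _
      have hinj : (A.filter (fun σ => Fmap q G u v c σ = σ')).card ≤
          ((Nu.powersetCard s) ×ˢ (Nv.powersetCard t)).card := by
        apply Finset.card_le_card_of_injOn
          (fun σ : T → Fin q => (Finset.univ.filter (fun w : T => G.Adj u ↑w ∧ σ w = c),
                     Finset.univ.filter (fun w : T => G.Adj v ↑w ∧ σ w = c)))
        · intro σ hσ
          rw [Finset.mem_coe, Finset.mem_filter] at hσ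
          obtain ⟨hσA, _⟩ := hσ
          rw [hA, Set.Finite.mem_toFinset] at hσA
          obtain ⟨_, hs', ht'⟩ := hσA
          rw [ncard_setOf_eq_card_filter] at hs' ht'
          rw [Finset.mem_coe, Finset.mem_product]
          constructor
          · rw [Finset.mem_powersetCard]
            refine ⟨?_, hs'⟩
            intro x hx
            simp only [Finset.mem_filter] at hx
            simp only [hNu, Finset.mem_filter, Finset.mem_univ, true_and]
            exact hx.2.1
          · rw [Finset.mem_powersetCard]
            refine ⟨?_, ht'⟩
            intro x hx
            simp only [Finset.mem_filter] at hx
            simp only [hNv, Finset.mem_filter, Finset.mem_univ, true_and]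
            exact hx.2.1
        · intro σ₁ hσ₁ σ₂ hσ₂ hg
          simp only [Finset.coe_filter, Set.mem_setOf_eq] at hσ₁ hσ₂
          have hF1 : Fmap q G u v c σ₁ = σ' := hσ₁.2
          have hF2 : Fmap q G u v c σ₂ = σ' := hσ₂.2
          have hgu := congrArg Prod.fst hg
          have hgv := congrArg Prod.snd hg
          simp only at hgu hgv
          have hmemu : ∀ w : T, (G.Adj u ↑w ∧ σ₁ w = c) ↔ (G.Adj u ↑w ∧ σ₂ w = c) := by
            intro w
            constructor <;> intro hw
            · have : w ∈ Finset.univ.filter (fun w : T => G.Adj u ↑w ∧ σ₁ w = c) := by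
                simp [hw]
              rw [hgu] at this
              simpa using this
            · have : w ∈ Finset.univ.filter (fun w : T => G.Adj u ↑w ∧ σ₂ w = c) := by
                simp [hw]
              rw [← hgu] at this
              simpa using this
          have hmemv : ∀ w : T, (G.Adj v ↑w ∧ σ₁ w = c) ↔ (G.Adj v ↑w ∧ σ₂ w = c) := by
            intro w
            constructor <;> intro hw
            · have : w ∈ Finset.univ.filter (fun w : T => G.Adj v ↑w ∧ σ₁ w = c) := by
                simp [hw]
              rw [hgv] at this
              simpa using this
            · have : w ∈ Finset.univ.filter (fun w : T => G.Adj v ↑w ∧ σ₂ w = c) := by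
                simp [hw]
              rw [← hgv] at this
              simpa using this
          funext w
          by_cases h1 : (G.Adj u ↑w ∨ G.Adj v ↑w) ∧ σ₁ w = c
          · rcases h1.1 with hu' | hv'
            · have := (hmemu w).1 ⟨hu', h1.2⟩
              rw [h1.2, this.2]
            · have := (hmemv w).1 ⟨hv', h1.2⟩
              rw [h1.2, this.2]
          · by_cases h2 : (G.Adj u ↑w ∨ G.Adj v ↑w) ∧ σ₂ w = c
            · exfalso
              rcases h2.1 with hu' | hv'
              · exact h1 ⟨Or.inl hu', ((hmemu w).2 ⟨hu', h2.2⟩).2⟩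
              · exact h1 ⟨Or.inr hv', ((hmemv w).2 ⟨hv', h2.2⟩).2⟩
            · rw [← Fmap_neg h1, ← Fmap_neg h2, hF1, hF2]
      refine hinj.trans ?_
      rw [Finset.card_product, Finset.card_powersetCard, Finset.card_powersetCard]
      exact Nat.mul_le_mul
        ((Nat.choose_le_choose s hNud).trans (Nat.choose_le_pow d s))
        ((Nat.choose_le_choose t hNvd).trans (Nat.choose_le_pow d t))
    have himg : A.image (Fmap q G u v c) ⊆ B := by
      intro σ' hσ'
      rw [Finset.mem_image] at hσ'
      obtain ⟨σ, hσ, rfl⟩ := hσ'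
      rw [hA, Set.Finite.mem_toFinset] at hσ
      rw [hB, Set.Finite.mem_toFinset]
      exact Fmap_mem hdeg hq hσ
    calc A.card ≤ (d ^ s * d ^ t) * (A.image (Fmap q G u v c)).card :=
          Finset.card_le_mul_card_image A _ hfiber
      _ ≤ d ^ (s + t) * B.card := by
          rw [← pow_add]
          exact Nat.mul_le_mul_left _ (Finset.card_le_card himg)
  rcases Nat.eq_zero_or_pos (d ^ (s + t)) with h0 | hpos
  · have hz : (d : ℝ) ^ (s + t) = 0 := by exact_mod_cast congrArg (Nat.cast : ℕ → ℝ) h0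
    rw [ge_iff_le, hz, div_zero]
    positivity
  · have hpos' : (0 : ℝ) < (d : ℝ) ^ (s + t) := by exact_mod_cast hpos
    rw [ge_iff_le, div_le_iff₀ hpos']
    calc ((Aset q G u v c s t).ncard : ℝ)
        ≤ ((d ^ (s + t) * (Aset q G u v c 0 0).ncard : ℕ) : ℝ) := Nat.cast_le.2 key
      _ = ((Aset q G u v c 0 0).ncard : ℝ) * (d : ℝ) ^ (s + t) := by push_cast; ring
end

section
/- Let q >= 3 and m, t be positive integers with t < q. In every proper q-coloring of the graph G_{m,t}, all cliques C_1, ..., C_m are colored by the same set of q-1 colors, and all independent sets I_1, ..., I_m are monochromatic in the single remaining color; the same holds for C_1', ..., C_m' and I_1', ..., I_m'. -/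
/-- Vertices of `G_{m,t}`: cliques `C_i` and `C_i'` (each a copy of `Fin m × Fin (q-1)`),
independent sets `I_i` and `I_i'` (copies of `Fin m × Fin t`), and vertices `s_i`. -/
abbrev Vmt (m q t : ℕ) :=
  (Fin m × Fin (q - 1)) ⊕ ((Fin m × Fin (q - 1)) ⊕ ((Fin m × Fin t) ⊕ ((Fin m × Fin t) ⊕ Fin m)))

def CV {m q t : ℕ} (i : Fin m) (x : Fin (q - 1)) : Vmt m q t := Sum.inl (i, x)
def CV' {m q t : ℕ} (i : Fin m) (x : Fin (q - 1)) : Vmt m q t := Sum.inr (Sum.inl (i, x))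
def IV {m q t : ℕ} (i : Fin m) (y : Fin t) : Vmt m q t := Sum.inr (Sum.inr (Sum.inl (i, y)))
def IV' {m q t : ℕ} (i : Fin m) (y : Fin t) : Vmt m q t :=
  Sum.inr (Sum.inr (Sum.inr (Sum.inl (i, y))))
def SV {m q t : ℕ} (i : Fin m) : Vmt m q t := Sum.inr (Sum.inr (Sum.inr (Sum.inr i)))

/-- Base relation of `G_{m,t}`.  `blk b i` is the `t`-block partition of the clique `C_i`
(`b = false`) resp. `C_i'` (`b = true`); `f i` (resp. `g i`) is the vertex of `I_i`
(resp. `I_i'`) adjacent to `s_i`.  Edges: cliques `C_i`, `C_i'`; complete bipartite graphs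
`C_i — I_i` and `C_i' — I_i'`; the `y`-th vertex of `I_{i-1}` joined to the block
`C_{i, y}` (likewise primed); `s_i` joined to one vertex of `I_i` and one of `I_i'`. -/
def gmtRel (m q t : ℕ) (blk : Bool → Fin m → Fin (q - 1) → Fin t)
    (f g : Fin m → Fin t) : Vmt m q t → Vmt m q t → Prop
  | Sum.inl (i, _), Sum.inl (j, _) => i = j
  | Sum.inl (i, x), Sum.inr (Sum.inr (Sum.inl (j, y))) =>
      i = j ∨ ((j : ℕ) + 1 = (i : ℕ) ∧ blk false i x = y)
  | Sum.inr (Sum.inl (i, _)), Sum.inr (Sum.inl (j, _)) => i = j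
  | Sum.inr (Sum.inl (i, x)), Sum.inr (Sum.inr (Sum.inr (Sum.inl (j, y)))) =>
      i = j ∨ ((j : ℕ) + 1 = (i : ℕ) ∧ blk true i x = y)
  | Sum.inr (Sum.inr (Sum.inr (Sum.inr i))), Sum.inr (Sum.inr (Sum.inl (j, y))) =>
      i = j ∧ y = f i
  | Sum.inr (Sum.inr (Sum.inr (Sum.inr i))), Sum.inr (Sum.inr (Sum.inr (Sum.inl (j, y)))) =>
      i = j ∧ y = g i
  | _, _ => False

/-- The graph `G_{m,t}`. -/
def gmtGraph (m q t : ℕ) (blk : Bool → Fin m → Fin (q - 1) → Fin t)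
    (f g : Fin m → Fin t) : SimpleGraph (Vmt m q t) :=
  SimpleGraph.fromRel (gmtRel m q t blk f g)

/-- The block partition is into `t` almost-equal parts (sizes `⌊(q-1)/t⌋` or `⌈(q-1)/t⌉`). -/
def BlkAlmostEqual (m q t : ℕ) (blk : Bool → Fin m → Fin (q - 1) → Fin t) : Prop :=
  ∀ (b : Bool) (i : Fin m) (j : Fin t),
    {x : Fin (q - 1) | blk b i x = j}.ncard = (q - 1) / t ∨
    {x : Fin (q - 1) | blk b i x = j}.ncard = (q - 1 + t - 1) / t

/-- A proper `q`-coloring. -/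
def IsProperColoring {V : Type} (q : ℕ) (G : SimpleGraph V) (σ : V → Fin q) : Prop :=
  ∀ u v : V, G.Adj u v → σ u ≠ σ v


lemma missing_range {a b : ℕ} (hab : b = a + 1) (φ : Fin a → Fin b)
    (hφ : Function.Injective φ) (c : Fin b) (hc : c ∉ Set.range φ) :
    Set.range φ = {d : Fin b | d ≠ c} := by
  classical
  have hcard : (Finset.univ.image φ).card = a := by
    rw [Finset.card_image_of_injective _ hφ, Finset.card_univ, Fintype.card_fin]
  have hcomp : ((Finset.univ.image φ)ᶜ).card = 1 := by
    rw [Finset.card_compl, Fintype.card_fin, hcard]; omega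
  obtain ⟨e, he⟩ := Finset.card_eq_one.1 hcomp
  have hce : c ∈ ((Finset.univ.image φ)ᶜ) := by
    simp only [Finset.mem_compl, Finset.mem_image]
    rintro ⟨x, -, hx⟩
    exact hc ⟨x, hx⟩
  rw [he, Finset.mem_singleton] at hce
  ext d
  simp only [Set.mem_range, Set.mem_setOf_eq]
  constructor
  · rintro ⟨x, rfl⟩ h
    exact hc ⟨x, h⟩
  · intro hd
    have : d ∉ ((Finset.univ.image φ)ᶜ) := by
      rw [he, Finset.mem_singleton, ← hce]; exact hd
    simp only [Finset.mem_compl, not_not, Finset.mem_image, Finset.mem_univ, true_and] at this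
    exact this

lemma compl_singleton_eq {q : ℕ} {a b : Fin q} (h : {d : Fin q | d ≠ a} = {d : Fin q | d ≠ b}) :
    a = b := by
  by_contra hab
  have : a ∈ {d : Fin q | d ≠ b} := hab
  rw [← h] at this
  exact this rfl
section Main
variable {q m t : ℕ} (blk : Bool → Fin m → Fin (q - 1) → Fin t) (f g : Fin m → Fin t)

lemma adj_CC {i : Fin m} {x x' : Fin (q-1)} (hx : x ≠ x') :
    (gmtGraph m q t blk f g).Adj (CV i x) (CV i x') := by
  refine ⟨?_, Or.inl rfl⟩
  simp [CV, hx]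

lemma adj_CI {i : Fin m} (x : Fin (q-1)) (y : Fin t) :
    (gmtGraph m q t blk f g).Adj (CV i x) (IV i y) := by
  exact ⟨by simp [CV, IV], Or.inl (Or.inl rfl)⟩

lemma adj_CI_blk {i j : Fin m} (h : (j : ℕ) + 1 = (i : ℕ)) (x : Fin (q-1)) :
    (gmtGraph m q t blk f g).Adj (CV i x) (IV j (blk false i x)) := by
  exact ⟨by simp [CV, IV], Or.inl (Or.inr ⟨h, rfl⟩)⟩

lemma adj_CC' {i : Fin m} {x x' : Fin (q-1)} (hx : x ≠ x') :
    (gmtGraph m q t blk f g).Adj (CV' i x) (CV' i x') := by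
  refine ⟨?_, Or.inl rfl⟩
  simp [CV', hx]

lemma adj_CI' {i : Fin m} (x : Fin (q-1)) (y : Fin t) :
    (gmtGraph m q t blk f g).Adj (CV' i x) (IV' i y) := by
  exact ⟨by simp [CV', IV'], Or.inl (Or.inl rfl)⟩

lemma adj_CI_blk' {i j : Fin m} (h : (j : ℕ) + 1 = (i : ℕ)) (x : Fin (q-1)) :
    (gmtGraph m q t blk f g).Adj (CV' i x) (IV' j (blk true i x)) := by
  exact ⟨by simp [CV', IV'], Or.inl (Or.inr ⟨h, rfl⟩)⟩

end Main

/-- In every proper q-coloring of G_{m,t}, all cliques C_i are colored by the same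
set of q-1 colors and all I_i are monochromatic in the single remaining color;
likewise for the primed copies. -/
theorem stmt10 (q m t : ℕ) (hq : 3 ≤ q) (hm : 1 ≤ m) (ht : 1 ≤ t) (htq : t < q)
    (blk : Bool → Fin m → Fin (q - 1) → Fin t)
    (hblk : BlkAlmostEqual m q t blk)
    (f g : Fin m → Fin t)
    (σ : Vmt m q t → Fin q)
    (hσ : IsProperColoring q (gmtGraph m q t blk f g) σ) :
    ∃ c₀ c₁ : Fin q,
      (∀ (i : Fin m) (y : Fin t), σ (IV i y) = c₀) ∧
      (∀ i : Fin m, Set.range (fun x : Fin (q - 1) => σ (CV i x)) = {c : Fin q | c ≠ c₀}) ∧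
      (∀ (i : Fin m) (y : Fin t), σ (IV' i y) = c₁) ∧
      (∀ i : Fin m, Set.range (fun x : Fin (q - 1) => σ (CV' i x)) = {c : Fin q | c ≠ c₁}) := by
  have hab : q = (q - 1) + 1 := by omega
  have y0 : Fin t := ⟨0, ht⟩
  -- unprimed part
  have inj : ∀ i : Fin m, Function.Injective (fun x : Fin (q-1) => σ (CV (m := m) (t := t) i x)) := by
    intro i x x' hxx
    by_contra hne
    exact hσ _ _ (adj_CC blk f g hne) hxx
  have hrange : ∀ (i : Fin m) (y : Fin t),
      Set.range (fun x : Fin (q-1) => σ (CV i x)) = {d : Fin q | d ≠ σ (IV i y)} := by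
    intro i y
    refine missing_range hab _ (inj i) _ ?_
    rintro ⟨x, hx⟩
    exact hσ _ _ (adj_CI blk f g x y) hx
  have mono : ∀ (i : Fin m) (y : Fin t), σ (IV (q := q) i y) = σ (IV i y0) := by
    intro i y
    exact compl_singleton_eq ((hrange i y).symm.trans (hrange i y0))
  have step : ∀ i j : Fin m, (j : ℕ) + 1 = (i : ℕ) → σ (IV (q := q) i y0) = σ (IV j y0) := by
    intro i j hij
    have hnot : σ (IV (q := q) j y0) ∉ Set.range (fun x : Fin (q-1) => σ (CV i x)) := by
      rintro ⟨x, hx⟩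
      have hx' : σ (CV i x) = σ (IV j y0) := hx
      exact hσ _ _ (adj_CI_blk blk f g hij x) (hx'.trans (mono j (blk false i x)).symm)
    rw [hrange i y0] at hnot
    simp only [Set.mem_setOf_eq, not_not] at hnot
    exact hnot.symm
  have all : ∀ n (h : n < m), σ (IV (q := q) ⟨n, h⟩ y0) = σ (IV ⟨0, hm⟩ y0) := by
    intro n
    induction n with
    | zero => intro h; rfl
    | succ k ih =>
      intro h
      rw [step ⟨k+1, h⟩ ⟨k, by omega⟩ rfl, ih (by omega)]
  -- primed part
  have inj' : ∀ i : Fin m, Function.Injective (fun x : Fin (q-1) => σ (CV' (m := m) (t := t) i x)) := by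
    intro i x x' hxx
    by_contra hne
    exact hσ _ _ (adj_CC' blk f g hne) hxx
  have hrange' : ∀ (i : Fin m) (y : Fin t),
      Set.range (fun x : Fin (q-1) => σ (CV' i x)) = {d : Fin q | d ≠ σ (IV' i y)} := by
    intro i y
    refine missing_range hab _ (inj' i) _ ?_
    rintro ⟨x, hx⟩
    exact hσ _ _ (adj_CI' blk f g x y) hx
  have mono' : ∀ (i : Fin m) (y : Fin t), σ (IV' (q := q) i y) = σ (IV' i y0) := by
    intro i y
    exact compl_singleton_eq ((hrange' i y).symm.trans (hrange' i y0))
  have step' : ∀ i j : Fin m, (j : ℕ) + 1 = (i : ℕ) → σ (IV' (q := q) i y0) = σ (IV' j y0) := by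
    intro i j hij
    have hnot : σ (IV' (q := q) j y0) ∉ Set.range (fun x : Fin (q-1) => σ (CV' i x)) := by
      rintro ⟨x, hx⟩
      have hx' : σ (CV' i x) = σ (IV' j y0) := hx
      exact hσ _ _ (adj_CI_blk' blk f g hij x) (hx'.trans (mono' j (blk true i x)).symm)
    rw [hrange' i y0] at hnot
    simp only [Set.mem_setOf_eq, not_not] at hnot
    exact hnot.symm
  have all' : ∀ n (h : n < m), σ (IV' (q := q) ⟨n, h⟩ y0) = σ (IV' ⟨0, hm⟩ y0) := by
    intro n
    induction n with
    | zero => intro h; rfl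
    | succ k ih =>
      intro h
      rw [step' ⟨k+1, h⟩ ⟨k, by omega⟩ rfl, ih (by omega)]
  refine ⟨σ (IV ⟨0, hm⟩ y0), σ (IV' ⟨0, hm⟩ y0), ?_, ?_, ?_, ?_⟩
  · intro i y
    rw [mono i y, show i = ⟨(i : ℕ), i.isLt⟩ from rfl, all _ _]
  · intro i
    rw [hrange i y0, show i = ⟨(i : ℕ), i.isLt⟩ from rfl, all _ _]
  · intro i y
    rw [mono' i y, show i = ⟨(i : ℕ), i.isLt⟩ from rfl, all' _ _]
  · intro i
    rw [hrange' i y0]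
    rw [show i = ⟨(i : ℕ), i.isLt⟩ from rfl, all' _ _]
end

section
/- For q >= 3, m >= 1, t < q, the number of proper q-colorings of G_{m,t} in which I_1 and I_1' receive the same color is q (q-1)^m ((q-1)!)^{2m}, and the number in which I_1 and I_1' receive distinct colors is q (q-1) (q-2)^m ((q-1)!)^{2m}. Consequently, for a uniformly random proper q-coloring of G_{m,t}, the probability that I_1 and I_1' have the same color is at least 1 - (q-1) e^{-m/(q-1)}. -/
open Function Finset in
lemma card_ne_fin {q : ℕ} (c : Fin q) : Fintype.card {x : Fin q // x ≠ c} = q - 1 := by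
  simp [Fintype.card_subtype_compl]

open Function Finset in
lemma card_ne2_fin {q : ℕ} {c c' : Fin q} (h : c' ≠ c) :
    Fintype.card {x : Fin q // x ≠ c ∧ x ≠ c'} = q - 2 := by
  rw [Fintype.card_subtype]
  have : Finset.filter (fun x => x ≠ c ∧ x ≠ c') Finset.univ = Finset.univ \ {c, c'} := by
    ext x; simp [and_comm]
  rw [this, Finset.card_sdiff_of_subset (by simp), Finset.card_pair (Ne.symm h)]
  simp [Finset.card_univ]

open Function in
lemma missing_unique {q : ℕ} (hq1 : 1 ≤ q) {h : Fin (q-1) → Fin q} (hinj : Function.Injective h)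
    {a b : Fin q} (ha : ∀ x, h x ≠ a) (hb : ∀ x, h x ≠ b) : a = b := by
  by_contra hab
  have hbmem : b ∉ Finset.image h Finset.univ := by simp [hb]
  have hamem : a ∉ insert b (Finset.image h Finset.univ) := by
    simp [ha, hab]
  have hcard := Finset.card_le_univ (insert a (insert b (Finset.image h Finset.univ)))
  rw [Finset.card_insert_of_notMem hamem, Finset.card_insert_of_notMem hbmem,
    Finset.card_image_of_injective _ hinj] at hcard
  simp [Finset.card_univ] at hcard
  omega

example {q : ℕ} (hq : 3 ≤ q) (c : Fin q) :
    Fintype.card (Fin (q-1) ≃ {x : Fin q // x ≠ c}) = Nat.factorial (q-1) := by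
  rw [Fintype.card_equiv (Fintype.equivOfCardEq (by simp [card_ne_fin]))]
  simp
def decodeFun {m q t : ℕ} (c c' : Fin q) (s : Fin m → Fin q)
    (e e' : Fin m → Fin (q - 1) → Fin q) : Vmt m q t → Fin q
  | Sum.inl (i, x) => e i x
  | Sum.inr (Sum.inl (i, x)) => e' i x
  | Sum.inr (Sum.inr (Sum.inl _)) => c
  | Sum.inr (Sum.inr (Sum.inr (Sum.inl _))) => c'
  | Sum.inr (Sum.inr (Sum.inr (Sum.inr i))) => s i

lemma decode_proper {m q t : ℕ} (blk : Bool → Fin m → Fin (q - 1) → Fin t)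
    (f g : Fin m → Fin t) (c c' : Fin q) (s : Fin m → Fin q)
    (e e' : Fin m → Fin (q - 1) → Fin q)
    (he : ∀ i, Function.Injective (e i)) (he' : ∀ i, Function.Injective (e' i))
    (hec : ∀ i x, e i x ≠ c) (hec' : ∀ i x, e' i x ≠ c')
    (hsc : ∀ i, s i ≠ c) (hsc' : ∀ i, s i ≠ c') :
    IsProperColoring q (gmtGraph m q t blk f g) (decodeFun c c' s e e') := by
  have key : ∀ u v : Vmt m q t, u ≠ v → gmtRel m q t blk f g u v →
      decodeFun c c' s e e' u ≠ decodeFun c c' s e e' v := by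
    rintro (⟨i,x⟩|⟨i,x⟩|⟨i,y⟩|⟨i,y⟩|i) (⟨j,x'⟩|⟨j,x'⟩|⟨j,y'⟩|⟨j,y'⟩|j) hne hrel <;>
      first
      | exact hrel.elim
      | exact hec i x
      | exact hec' i x
      | exact hsc i
      | exact hsc' i
      | (cases hrel; exact fun hxy => hne (by rw [he _ hxy]))
      | (cases hrel; exact fun hxy => hne (by rw [he' _ hxy]))
  intro u v huv
  rw [gmtGraph, SimpleGraph.fromRel_adj] at huv
  obtain ⟨hne, h | h⟩ := huv
  · exact key u v hne h
  · exact (key v u (Ne.symm hne) h).symm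
section Forward
variable {m q t : ℕ} {blk : Bool → Fin m → Fin (q - 1) → Fin t} {f g : Fin m → Fin t}
  {σ : Vmt m q t → Fin q}

lemma adj_of_rel {u v : Vmt m q t} (h1 : u ≠ v) (h2 : gmtRel m q t blk f g u v) :
    (gmtGraph m q t blk f g).Adj u v := by
  rw [gmtGraph, SimpleGraph.fromRel_adj]; exact ⟨h1, Or.inl h2⟩

variable (hσ : IsProperColoring q (gmtGraph m q t blk f g) σ)
include hσ

lemma injC (i : Fin m) : Function.Injective (fun x => σ (CV (t := t) i x)) := by
  intro x x' hxx'
  by_contra hne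
  exact hσ _ _ (adj_of_rel (u := CV i x) (v := CV i x') (blk := blk) (f := f) (g := g)
    (by simpa [CV] using hne) rfl) hxx'

lemma injC' (i : Fin m) : Function.Injective (fun x => σ (CV' (t := t) i x)) := by
  intro x x' hxx'
  by_contra hne
  exact hσ _ _ (adj_of_rel (u := CV' i x) (v := CV' i x') (blk := blk) (f := f) (g := g)
    (by simpa [CV'] using hne) rfl) hxx'

lemma Iavoid (i : Fin m) (x : Fin (q - 1)) (y : Fin t) : σ (CV i x) ≠ σ (IV i y) :=
  hσ _ _ (adj_of_rel (by simp [CV, IV]) (Or.inl rfl))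

lemma Iavoid' (i : Fin m) (x : Fin (q - 1)) (y : Fin t) : σ (CV' i x) ≠ σ (IV' i y) :=
  hσ _ _ (adj_of_rel (by simp [CV', IV']) (Or.inl rfl))

lemma IavoidPrev (i j : Fin m) (hij : (j : ℕ) + 1 = (i : ℕ)) (x : Fin (q - 1)) :
    σ (CV i x) ≠ σ (IV j (blk false i x)) :=
  hσ _ _ (adj_of_rel (by simp [CV, IV]) (Or.inr ⟨hij, rfl⟩))

lemma IavoidPrev' (i j : Fin m) (hij : (j : ℕ) + 1 = (i : ℕ)) (x : Fin (q - 1)) :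
    σ (CV' i x) ≠ σ (IV' j (blk true i x)) :=
  hσ _ _ (adj_of_rel (by simp [CV', IV']) (Or.inr ⟨hij, rfl⟩))

lemma sAvoid (i : Fin m) : σ (SV i) ≠ σ (IV i (f i)) :=
  hσ _ _ (adj_of_rel (by simp [SV, IV]) ⟨rfl, rfl⟩)

lemma sAvoid' (i : Fin m) : σ (SV i) ≠ σ (IV' i (g i)) :=
  hσ _ _ (adj_of_rel (by simp [SV, IV']) ⟨rfl, rfl⟩)

lemma Imono (hq1 : 1 ≤ q) (i : Fin m) (y y' : Fin t) : σ (IV i y) = σ (IV i y') :=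
  missing_unique hq1 (injC hσ i) (fun x => Iavoid hσ i x y) (fun x => Iavoid hσ i x y')

lemma Imono' (hq1 : 1 ≤ q) (i : Fin m) (y y' : Fin t) : σ (IV' i y) = σ (IV' i y') :=
  missing_unique hq1 (injC' hσ i) (fun x => Iavoid' hσ i x y) (fun x => Iavoid' hσ i x y')

lemma Ichain (hq1 : 1 ≤ q) (i j : Fin m) (hij : (j : ℕ) + 1 = (i : ℕ)) (y y' : Fin t) :
    σ (IV i y) = σ (IV j y') := by
  refine missing_unique hq1 (injC hσ i) (fun x => Iavoid hσ i x y) (fun x => ?_)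
  rw [Imono hσ hq1 j y' (blk false i x)]
  exact IavoidPrev hσ i j hij x

lemma Ichain' (hq1 : 1 ≤ q) (i j : Fin m) (hij : (j : ℕ) + 1 = (i : ℕ)) (y y' : Fin t) :
    σ (IV' i y) = σ (IV' j y') := by
  refine missing_unique hq1 (injC' hσ i) (fun x => Iavoid' hσ i x y) (fun x => ?_)
  rw [Imono' hσ hq1 j y' (blk true i x)]
  exact IavoidPrev' hσ i j hij x

lemma ImonoAll (hq1 : 1 ≤ q) (hm : 1 ≤ m) (ht : 1 ≤ t) (i : Fin m) (y : Fin t) :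
    σ (IV i y) = σ (IV ⟨0, hm⟩ ⟨0, ht⟩) := by
  obtain ⟨n, hn⟩ := i
  induction n with
  | zero => exact Imono hσ hq1 _ _ _
  | succ k ih =>
    have hk : k < m := Nat.lt_of_succ_lt hn
    calc σ (IV ⟨k + 1, hn⟩ y) = σ (IV ⟨k, hk⟩ y) := Ichain hσ hq1 _ _ rfl _ _
      _ = _ := ih hk

lemma ImonoAll' (hq1 : 1 ≤ q) (hm : 1 ≤ m) (ht : 1 ≤ t) (i : Fin m) (y : Fin t) :
    σ (IV' i y) = σ (IV' ⟨0, hm⟩ ⟨0, ht⟩) := by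
  obtain ⟨n, hn⟩ := i
  induction n with
  | zero => exact Imono' hσ hq1 _ _ _
  | succ k ih =>
    have hk : k < m := Nat.lt_of_succ_lt hn
    calc σ (IV' ⟨k + 1, hn⟩ y) = σ (IV' ⟨k, hk⟩ y) := Ichain' hσ hq1 _ _ rfl _ _
      _ = _ := ih hk

end Forward
abbrev SameData (m q : ℕ) (c : Fin q) : Type :=
  (Fin m → {x : Fin q // x ≠ c}) × (Fin m → (Fin (q - 1) ≃ {x : Fin q // x ≠ c}))
    × (Fin m → (Fin (q - 1) ≃ {x : Fin q // x ≠ c}))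

abbrev DiffData (m q : ℕ) (c c' : Fin q) : Type :=
  (Fin m → {x : Fin q // x ≠ c ∧ x ≠ c'}) × (Fin m → (Fin (q - 1) ≃ {x : Fin q // x ≠ c}))
    × (Fin m → (Fin (q - 1) ≃ {x : Fin q // x ≠ c'}))

def decodeS (m q t : ℕ) (d : Σ c : Fin q, SameData m q c) : Vmt m q t → Fin q :=
  decodeFun d.1 d.1 (fun i => (d.2.1 i : Fin q))
    (fun i x => (d.2.2.1 i x : Fin q)) (fun i x => (d.2.2.2 i x : Fin q))

def decodeD (m q t : ℕ) (d : Σ c : Fin q, Σ c' : {d : Fin q // d ≠ c}, DiffData m q c c'.1) :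
    Vmt m q t → Fin q :=
  decodeFun d.1 d.2.1.1 (fun i => (d.2.2.1 i : Fin q))
    (fun i x => (d.2.2.2.1 i x : Fin q)) (fun i x => (d.2.2.2.2 i x : Fin q))

lemma decodeS_inj {m q t : ℕ} (hm : 1 ≤ m) (ht : 1 ≤ t) :
    Function.Injective (decodeS m q t) := by
  rintro ⟨c, s, e, e'⟩ ⟨c2, s2, e2, e2'⟩ h
  obtain rfl : c = c2 := congrFun h (IV ⟨0, hm⟩ ⟨0, ht⟩)
  have hs : s = s2 := funext fun i => Subtype.ext (congrFun h (SV i))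
  have he : e = e2 := funext fun i => Equiv.ext fun x => Subtype.ext (congrFun h (CV i x))
  have he' : e' = e2' := funext fun i => Equiv.ext fun x => Subtype.ext (congrFun h (CV' i x))
  subst hs he he'
  rfl

lemma decodeD_inj {m q t : ℕ} (hm : 1 ≤ m) (ht : 1 ≤ t) :
    Function.Injective (decodeD m q t) := by
  rintro ⟨c, ⟨c', hc'⟩, s, e, e'⟩ ⟨c2, ⟨c2', hc2'⟩, s2, e2, e2'⟩ h
  obtain rfl : c = c2 := congrFun h (IV ⟨0, hm⟩ ⟨0, ht⟩)
  obtain rfl : c' = c2' := congrFun h (IV' ⟨0, hm⟩ ⟨0, ht⟩)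
  have hs : s = s2 := funext fun i => Subtype.ext (congrFun h (SV i))
  have he : e = e2 := funext fun i => Equiv.ext fun x => Subtype.ext (congrFun h (CV i x))
  have he' : e' = e2' := funext fun i => Equiv.ext fun x => Subtype.ext (congrFun h (CV' i x))
  subst hs he he'
  rfl
lemma range_decodeS {m q t : ℕ} (hq : 3 ≤ q) (hm : 1 ≤ m) (ht : 1 ≤ t)
    (blk : Bool → Fin m → Fin (q - 1) → Fin t) (f g : Fin m → Fin t) :
    Set.range (decodeS m q t) =
      {σ : Vmt m q t → Fin q | IsProperColoring q (gmtGraph m q t blk f g) σ ∧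
        σ (IV ⟨0, hm⟩ ⟨0, ht⟩) = σ (IV' ⟨0, hm⟩ ⟨0, ht⟩)} := by
  have hq1 : 1 ≤ q := by omega
  ext σ
  constructor
  · rintro ⟨⟨c, s, e, e'⟩, rfl⟩
    refine ⟨decode_proper blk f g c c _ _ _
      (fun i => Subtype.coe_injective.comp (e i).injective)
      (fun i => Subtype.coe_injective.comp (e' i).injective)
      (fun i x => (e i x).2) (fun i x => (e' i x).2)
      (fun i => (s i).2) (fun i => (s i).2), rfl⟩
  · rintro ⟨hσ, hsame⟩
    set c := σ (IV ⟨0, hm⟩ ⟨0, ht⟩) with hc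
    have hIV : ∀ (i : Fin m) y, σ (IV i y) = c := ImonoAll hσ hq1 hm ht
    have hIV' : ∀ (i : Fin m) y, σ (IV' i y) = c :=
      fun i y => (ImonoAll' hσ hq1 hm ht i y).trans hsame.symm
    have hCV : ∀ (i : Fin m) x, σ (CV i x) ≠ c := fun i x => by
      rw [← hIV i ⟨0, ht⟩]; exact Iavoid hσ i x _
    have hCV' : ∀ (i : Fin m) x, σ (CV' i x) ≠ c := fun i x => by
      rw [← hIV' i ⟨0, ht⟩]; exact Iavoid' hσ i x _
    have hSV : ∀ i : Fin m, σ (SV i) ≠ c := fun i => by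
      rw [← hIV i (f i)]; exact sAvoid hσ i
    have hbij : ∀ i : Fin m, Function.Bijective
        (fun x => (⟨σ (CV i x), hCV i x⟩ : {x : Fin q // x ≠ c})) :=
      fun i => (Fintype.bijective_iff_injective_and_card _).2
        ⟨fun a b hab => injC hσ i (congrArg Subtype.val hab), by simp [card_ne_fin]⟩
    have hbij' : ∀ i : Fin m, Function.Bijective
        (fun x => (⟨σ (CV' i x), hCV' i x⟩ : {x : Fin q // x ≠ c})) :=
      fun i => (Fintype.bijective_iff_injective_and_card _).2
        ⟨fun a b hab => injC' hσ i (congrArg Subtype.val hab), by simp [card_ne_fin]⟩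
    refine ⟨⟨c, fun i => ⟨σ (SV i), hSV i⟩, fun i => Equiv.ofBijective _ (hbij i),
      fun i => Equiv.ofBijective _ (hbij' i)⟩, ?_⟩
    funext v
    rcases v with (⟨i, x⟩ | ⟨i, x⟩ | ⟨i, y⟩ | ⟨i, y⟩ | i)
    · rfl
    · rfl
    · exact (hIV i y).symm
    · exact (hIV' i y).symm
    · rfl

lemma range_decodeD {m q t : ℕ} (hq : 3 ≤ q) (hm : 1 ≤ m) (ht : 1 ≤ t)
    (blk : Bool → Fin m → Fin (q - 1) → Fin t) (f g : Fin m → Fin t) :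
    Set.range (decodeD m q t) =
      {σ : Vmt m q t → Fin q | IsProperColoring q (gmtGraph m q t blk f g) σ ∧
        σ (IV ⟨0, hm⟩ ⟨0, ht⟩) ≠ σ (IV' ⟨0, hm⟩ ⟨0, ht⟩)} := by
  have hq1 : 1 ≤ q := by omega
  ext σ
  constructor
  · rintro ⟨⟨c, ⟨c', hcc'⟩, s, e, e'⟩, rfl⟩
    refine ⟨decode_proper blk f g c c' _ _ _
      (fun i => Subtype.coe_injective.comp (e i).injective)
      (fun i => Subtype.coe_injective.comp (e' i).injective)
      (fun i x => (e i x).2) (fun i x => (e' i x).2)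
      (fun i => (s i).2.1) (fun i => (s i).2.2), Ne.symm hcc'⟩
  · rintro ⟨hσ, hdiff⟩
    set c := σ (IV ⟨0, hm⟩ ⟨0, ht⟩) with hc
    set c' := σ (IV' ⟨0, hm⟩ ⟨0, ht⟩) with hc'
    have hIV : ∀ (i : Fin m) y, σ (IV i y) = c := ImonoAll hσ hq1 hm ht
    have hIV' : ∀ (i : Fin m) y, σ (IV' i y) = c' := ImonoAll' hσ hq1 hm ht
    have hCV : ∀ (i : Fin m) x, σ (CV i x) ≠ c := fun i x => by
      rw [← hIV i ⟨0, ht⟩]; exact Iavoid hσ i x _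
    have hCV' : ∀ (i : Fin m) x, σ (CV' i x) ≠ c' := fun i x => by
      rw [← hIV' i ⟨0, ht⟩]; exact Iavoid' hσ i x _
    have hSV : ∀ i : Fin m, σ (SV i) ≠ c ∧ σ (SV i) ≠ c' := fun i =>
      ⟨by rw [← hIV i (f i)]; exact sAvoid hσ i,
       by rw [← hIV' i (g i)]; exact sAvoid' hσ i⟩
    have hbij : ∀ i : Fin m, Function.Bijective
        (fun x => (⟨σ (CV i x), hCV i x⟩ : {x : Fin q // x ≠ c})) :=
      fun i => (Fintype.bijective_iff_injective_and_card _).2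
        ⟨fun a b hab => injC hσ i (congrArg Subtype.val hab), by simp [card_ne_fin]⟩
    have hbij' : ∀ i : Fin m, Function.Bijective
        (fun x => (⟨σ (CV' i x), hCV' i x⟩ : {x : Fin q // x ≠ c'})) :=
      fun i => (Fintype.bijective_iff_injective_and_card _).2
        ⟨fun a b hab => injC' hσ i (congrArg Subtype.val hab), by simp [card_ne_fin]⟩
    refine ⟨⟨c, ⟨c', Ne.symm hdiff⟩, fun i => ⟨σ (SV i), hSV i⟩,
      fun i => Equiv.ofBijective _ (hbij i), fun i => Equiv.ofBijective _ (hbij' i)⟩, ?_⟩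
    funext v
    rcases v with (⟨i, x⟩ | ⟨i, x⟩ | ⟨i, y⟩ | ⟨i, y⟩ | i)
    · rfl
    · rfl
    · exact (hIV i y).symm
    · exact (hIV' i y).symm
    · rfl
lemma card_sameData {m q : ℕ} (hq : 3 ≤ q) :
    Nat.card (Σ c : Fin q, SameData m q c) =
      q * (q - 1) ^ m * (Nat.factorial (q - 1)) ^ (2 * m) := by
  rw [Nat.card_eq_fintype_card, Fintype.card_sigma]
  have h1 : ∀ c : Fin q, Fintype.card (SameData m q c) =
      (q - 1) ^ m * (Nat.factorial (q - 1) ^ m * Nat.factorial (q - 1) ^ m) := by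
    intro c
    rw [Fintype.card_prod, Fintype.card_prod, Fintype.card_fun, Fintype.card_fun,
      card_ne_fin, Fintype.card_equiv (Fintype.equivOfCardEq (by simp [card_ne_fin]))]
    simp
  simp only [h1, Finset.sum_const, Finset.card_univ, Fintype.card_fin, smul_eq_mul]
  rw [two_mul, pow_add]; ring

lemma card_diffData {m q : ℕ} (hq : 3 ≤ q) :
    Nat.card (Σ c : Fin q, Σ c' : {d : Fin q // d ≠ c}, DiffData m q c c'.1) =
      q * (q - 1) * (q - 2) ^ m * (Nat.factorial (q - 1)) ^ (2 * m) := by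
  rw [Nat.card_eq_fintype_card, Fintype.card_sigma]
  have h1 : ∀ (c : Fin q) (c' : {d : Fin q // d ≠ c}), Fintype.card (DiffData m q c c'.1) =
      (q - 2) ^ m * (Nat.factorial (q - 1) ^ m * Nat.factorial (q - 1) ^ m) := by
    rintro c ⟨c', hc'⟩
    rw [Fintype.card_prod, Fintype.card_prod, Fintype.card_fun, Fintype.card_fun,
      Fintype.card_fun, card_ne2_fin hc',
      Fintype.card_equiv (Fintype.equivOfCardEq (by simp [card_ne_fin] : Fintype.card (Fin (q-1)) = Fintype.card {x : Fin q // x ≠ c})),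
      Fintype.card_equiv (Fintype.equivOfCardEq (by simp [card_ne_fin] : Fintype.card (Fin (q-1)) = Fintype.card {x : Fin q // x ≠ c'}))]
    simp
  have h2 : ∀ c : Fin q, Fintype.card (Σ c' : {d : Fin q // d ≠ c}, DiffData m q c c'.1) =
      (q - 1) * ((q - 2) ^ m * (Nat.factorial (q - 1) ^ m * Nat.factorial (q - 1) ^ m)) := by
    intro c
    rw [Fintype.card_sigma]
    simp only [h1 c, Finset.sum_const, Finset.card_univ, smul_eq_mul, card_ne_fin]
  simp only [h2, Finset.sum_const, Finset.card_univ, Fintype.card_fin, smul_eq_mul]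
  rw [two_mul, pow_add]; ring
lemma final_ineq (q m F : ℕ) (hq : 3 ≤ q) (hF : 0 < F) :
    ((q * (q - 1) ^ m * F : ℕ) : ℝ) /
        ((q * (q - 1) ^ m * F + q * (q - 1) * (q - 2) ^ m * F : ℕ) : ℝ)
      ≥ 1 - ((q : ℝ) - 1) * Real.exp (-(m : ℝ) / ((q : ℝ) - 1)) := by
  have hq1 : (1 : ℕ) ≤ q := by omega
  have hq2 : (2 : ℕ) ≤ q := by omega
  have hQ3 : (3 : ℝ) ≤ (q : ℝ) := by exact_mod_cast hq
  push_cast [Nat.cast_sub hq1, Nat.cast_sub hq2]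
  set Q : ℝ := (q : ℝ) with hQ
  have hQ1 : (0 : ℝ) < Q - 1 := by linarith
  have hQ2 : (0 : ℝ) ≤ Q - 2 := by linarith
  have hFR : (0 : ℝ) < (F : ℝ) := by exact_mod_cast hF
  set a : ℝ := Q * (Q - 1) ^ m * (F : ℝ) with ha
  set b : ℝ := Q * (Q - 1) * (Q - 2) ^ m * (F : ℝ) with hb
  have hapos : 0 < a := by positivity
  have hbpos : 0 ≤ b := by positivity
  have habpos : 0 < a + b := by linarith
  have key1 : a / (a + b) = 1 - b / (a + b) := by field_simp; ring
  have key2 : b / (a + b) ≤ b / a := by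
    apply div_le_div_of_nonneg_left hbpos hapos
    linarith
  have hba : b / a = (Q - 1) * ((Q - 2) / (Q - 1)) ^ m := by
    rw [div_pow]
    field_simp
    ring
  have h1 : (Q - 2) / (Q - 1) ≤ Real.exp (-(1 / (Q - 1))) := by
    have h := Real.add_one_le_exp (-(1 / (Q - 1)))
    have heq : (Q - 2) / (Q - 1) = -(1 / (Q - 1)) + 1 := by field_simp; ring
    rw [heq]; exact h
  have h2 : ((Q - 2) / (Q - 1)) ^ m ≤ Real.exp (-(1 / (Q - 1))) ^ m :=
    pow_le_pow_left₀ (div_nonneg hQ2 hQ1.le) h1 m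
  have h3 : Real.exp (-(1 / (Q - 1))) ^ m = Real.exp (-(m : ℝ) / (Q - 1)) := by
    rw [← Real.exp_nat_mul]
    congr 1
    field_simp
  have h4 : b / a ≤ (Q - 1) * Real.exp (-(m : ℝ) / (Q - 1)) := by
    rw [hba, ← h3]
    exact mul_le_mul_of_nonneg_left h2 hQ1.le
  rw [key1]
  linarith
/-- Exact counts of proper q-colorings of G_{m,t} according to whether the
(monochromatic) independent sets I_1 and I_1' receive the same or distinct colors,
and the resulting probability bound. -/
theorem stmt11 (q m t : ℕ) (hq : 3 ≤ q) (hm : 1 ≤ m) (ht : 1 ≤ t) (htq : t < q)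
    (blk : Bool → Fin m → Fin (q - 1) → Fin t)
    (hblk : BlkAlmostEqual m q t blk)
    (f g : Fin m → Fin t) :
    {σ : Vmt m q t → Fin q | IsProperColoring q (gmtGraph m q t blk f g) σ ∧
        σ (IV ⟨0, hm⟩ ⟨0, ht⟩) = σ (IV' ⟨0, hm⟩ ⟨0, ht⟩)}.ncard =
      q * (q - 1) ^ m * (Nat.factorial (q - 1)) ^ (2 * m) ∧
    {σ : Vmt m q t → Fin q | IsProperColoring q (gmtGraph m q t blk f g) σ ∧
        σ (IV ⟨0, hm⟩ ⟨0, ht⟩) ≠ σ (IV' ⟨0, hm⟩ ⟨0, ht⟩)}.ncard =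
      q * (q - 1) * (q - 2) ^ m * (Nat.factorial (q - 1)) ^ (2 * m) ∧
    (({σ : Vmt m q t → Fin q | IsProperColoring q (gmtGraph m q t blk f g) σ ∧
          σ (IV ⟨0, hm⟩ ⟨0, ht⟩) = σ (IV' ⟨0, hm⟩ ⟨0, ht⟩)}.ncard : ℝ) /
        ({σ : Vmt m q t → Fin q | IsProperColoring q (gmtGraph m q t blk f g) σ}.ncard : ℝ))
      ≥ 1 - ((q : ℝ) - 1) * Real.exp (-(m : ℝ) / ((q : ℝ) - 1)) := by
  set A := {σ : Vmt m q t → Fin q | IsProperColoring q (gmtGraph m q t blk f g) σ ∧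
      σ (IV ⟨0, hm⟩ ⟨0, ht⟩) = σ (IV' ⟨0, hm⟩ ⟨0, ht⟩)} with hAdef
  set B := {σ : Vmt m q t → Fin q | IsProperColoring q (gmtGraph m q t blk f g) σ ∧
      σ (IV ⟨0, hm⟩ ⟨0, ht⟩) ≠ σ (IV' ⟨0, hm⟩ ⟨0, ht⟩)} with hBdef
  set P := {σ : Vmt m q t → Fin q | IsProperColoring q (gmtGraph m q t blk f g) σ} with hPdef
  have hA : A.ncard = q * (q - 1) ^ m * (Nat.factorial (q - 1)) ^ (2 * m) := by
    rw [hAdef, ← range_decodeS hq hm ht blk f g, ← Nat.card_coe_set_eq,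
      Nat.card_range_of_injective (decodeS_inj hm ht), card_sameData hq]
  have hB : B.ncard = q * (q - 1) * (q - 2) ^ m * (Nat.factorial (q - 1)) ^ (2 * m) := by
    rw [hBdef, ← range_decodeD hq hm ht blk f g, ← Nat.card_coe_set_eq,
      Nat.card_range_of_injective (decodeD_inj hm ht), card_diffData hq]
  have hPAB : P = A ∪ B := by
    ext σ
    simp only [hAdef, hBdef, hPdef, Set.mem_union, Set.mem_setOf_eq]
    tauto
  have hdisj : Disjoint A B := by
    rw [Set.disjoint_left]
    rintro σ ⟨_, h1⟩ ⟨_, h2⟩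
    exact h2 h1
  have hP : P.ncard = q * (q - 1) ^ m * (Nat.factorial (q - 1)) ^ (2 * m) +
      q * (q - 1) * (q - 2) ^ m * (Nat.factorial (q - 1)) ^ (2 * m) := by
    rw [hPAB, Set.ncard_union_eq hdisj (Set.toFinite A) (Set.toFinite B), hA, hB]
  refine ⟨hA, hB, ?_⟩
  rw [hA, hP]
  have hF : 0 < (Nat.factorial (q - 1)) ^ (2 * m) := pow_pos (Nat.factorial_pos _) _
  exact final_ineq q m _ hq hF
end

section
/- Every graph in the family G_{m,t} (i.e., G_{m,t} together with any subset of the extra edges {x_i, y_i}) has exactly (2q + 2t - 1) m vertices and maximum degree at most max{ q + t, q + ceil((q-1)/t) + 1 }. In particular, for t = ceil(sqrt(q-1)), the maximum degree is at most q + ceil(sqrt(q-1)) + 1. -/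
/-- Extra edges {x_i, y_i} joining a fixed vertex xf i of C_i to a fixed vertex
yf i of I_i' (not adjacent to s_i); S selects which of the extra edges are present. -/
def gmtExtra (m q t : ℕ) (xf : Fin m → Fin (q - 1)) (yf : Fin m → Fin t)
    (S : Fin m → Prop) : Vmt m q t → Vmt m q t → Prop
  | Sum.inl (i, x), Sum.inr (Sum.inr (Sum.inr (Sum.inl (j, y)))) =>
      S i ∧ i = j ∧ x = xf i ∧ y = yf i
  | _, _ => False

/-- A member of the family 𝒢_{m,t}. -/
def gmtFamGraph (m q t : ℕ) (blk : Bool → Fin m → Fin (q - 1) → Fin t)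
    (f g : Fin m → Fin t) (xf : Fin m → Fin (q - 1)) (yf : Fin m → Fin t)
    (S : Fin m → Prop) : SimpleGraph (Vmt m q t) :=
  SimpleGraph.fromRel (fun a b => gmtRel m q t blk f g a b ∨ gmtExtra m q t xf yf S a b)


lemma aux_ncard_le_one {α : Type} {s : Set α} (h : s.Subsingleton) : s.ncard ≤ 1 := by
  rcases h.eq_empty_or_singleton with h | ⟨x, h⟩ <;> simp [h]

lemma aux_ncard_compl_singleton {n : ℕ} (x : Fin n) :
    ({x}ᶜ : Set (Fin n)).ncard = n - 1 := by
  rw [Set.compl_eq_univ_diff, Set.ncard_diff_singleton_of_mem (Set.mem_univ x),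
    Set.ncard_univ, Nat.card_eq_fintype_card, Fintype.card_fin]

lemma aux_ncard_univ_fin (n : ℕ) : (Set.univ : Set (Fin n)).ncard = n := by
  rw [Set.ncard_univ, Nat.card_eq_fintype_card, Fintype.card_fin]

/-- Every graph in the family 𝒢_{m,t} has (2q+2t-1)m vertices and maximum degree at
most max(q+t, q+⌈(q-1)/t⌉+1); in particular, if t ≥ ⌈√(q-1)⌉ (i.e. t² ≥ q-1) the
maximum degree is at most q+t+1. -/
theorem stmt12 (q m t : ℕ) (hq : 3 ≤ q) (hm : 1 ≤ m) (ht : 1 ≤ t) (htq : t < q)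
    (blk : Bool → Fin m → Fin (q - 1) → Fin t)
    (hblk : BlkAlmostEqual m q t blk)
    (f g : Fin m → Fin t)
    (xf : Fin m → Fin (q - 1)) (yf : Fin m → Fin t)
    (hyf : ∀ i, yf i ≠ g i)
    (S : Fin m → Prop) :
    Fintype.card (Vmt m q t) = (2 * q + 2 * t - 1) * m ∧
    (∀ v : Vmt m q t,
      ((gmtFamGraph m q t blk f g xf yf S).neighborSet v).ncard ≤
        max (q + t) (q + (q - 1 + t - 1) / t + 1)) ∧
    (q - 1 ≤ t * t →
      ∀ v : Vmt m q t,
        ((gmtFamGraph m q t blk f g xf yf S).neighborSet v).ncard ≤ q + t + 1) := by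
  have hblk' : ∀ (b : Bool) (i : Fin m) (j : Fin t),
      {x : Fin (q - 1) | blk b i x = j}.ncard ≤ (q - 1 + t - 1) / t := by
    intro b i j
    rcases hblk b i j with h | h
    · rw [h]; exact Nat.div_le_div_right (by omega)
    · omega
  have hA2 : ∀ (b : Bool) (i : Fin m) (y : Fin t)
      (mk : Fin m → Fin (q - 1) → Vmt m q t),
      (∀ j₁ j₂ x₁ x₂, mk j₁ x₁ = mk j₂ x₂ → j₁ = j₂) →
      {w | ∃ (jj : Fin m) (xx : Fin (q - 1)),
          (i : ℕ) + 1 = (jj : ℕ) ∧ blk b jj xx = y ∧ w = mk jj xx}.ncard ≤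
        (q - 1 + t - 1) / t := by
    intro b i y mk _
    by_cases hlt : (i : ℕ) + 1 < m
    · set j0 : Fin m := ⟨(i : ℕ) + 1, hlt⟩ with hj0
      have hsub : {w | ∃ (jj : Fin m) (xx : Fin (q - 1)),
          (i : ℕ) + 1 = (jj : ℕ) ∧ blk b jj xx = y ∧ w = mk jj xx} ⊆
          (fun xx => mk j0 xx) '' {xx | blk b j0 xx = y} := by
        rintro w ⟨jj, xx, hj, hb, rfl⟩
        have hjj : jj = j0 := Fin.ext (by rw [hj0]; exact hj.symm)
        subst hjj
        exact ⟨xx, hb, rfl⟩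
      calc _ ≤ ((fun xx => mk j0 xx) '' {xx | blk b j0 xx = y}).ncard :=
            Set.ncard_le_ncard hsub (Set.toFinite _)
        _ ≤ ({xx | blk b j0 xx = y}).ncard := Set.ncard_image_le
        _ ≤ _ := hblk' b j0 y
    · have hempty : {w | ∃ (jj : Fin m) (xx : Fin (q - 1)),
          (i : ℕ) + 1 = (jj : ℕ) ∧ blk b jj xx = y ∧ w = mk jj xx} = ∅ := by
        rw [Set.eq_empty_iff_forall_notMem]
        rintro w ⟨jj, xx, hj, -, -⟩
        exact hlt (hj ▸ jj.isLt)
      rw [hempty, Set.ncard_empty]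
      exact Nat.zero_le _
  have hcard : Fintype.card (Vmt m q t) = (2 * q + 2 * t - 1) * m := by
    obtain ⟨a, rfl⟩ : ∃ a, q = a + 3 := ⟨q - 3, by omega⟩
    have e : a + 3 - 1 = a + 2 := rfl
    simp only [Vmt, Fintype.card_sum, Fintype.card_prod, Fintype.card_fin, e]
    have e2 : 2 * (a + 3) + 2 * t - 1 = 2 * a + 2 * t + 5 := by omega
    rw [e2]; ring
  have hmain : ∀ v : Vmt m q t,
      ((gmtFamGraph m q t blk f g xf yf S).neighborSet v).ncard ≤
        max (q + t) (q + (q - 1 + t - 1) / t + 1) := by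
    intro v
    rcases v with ⟨i, x⟩ | ⟨⟨i, x⟩ | ⟨⟨i, y⟩ | ⟨⟨i, y⟩ | i⟩⟩⟩
    · -- v in C_i : degree ≤ q + t
      set A1 : Set (Vmt m q t) := (fun x' => CV i x') '' {x}ᶜ with hA1def
      set B2 : Set (Vmt m q t) := (fun y => IV i y) '' Set.univ with hB2def
      set A3 : Set (Vmt m q t) :=
        {w | ∃ j : Fin m, (j : ℕ) + 1 = (i : ℕ) ∧ w = IV j (blk false i x)} with hA3def
      set A4 : Set (Vmt m q t) := {IV' i (yf i)} with hA4def
      have hsub : (gmtFamGraph m q t blk f g xf yf S).neighborSet (Sum.inl (i, x)) ⊆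
          A1 ∪ B2 ∪ A3 ∪ A4 := by
        intro w hw
        rcases w with ⟨j, x'⟩ | ⟨⟨j, x'⟩ | ⟨⟨j, y⟩ | ⟨⟨j, y⟩ | j⟩⟩⟩ <;>
          simp only [SimpleGraph.mem_neighborSet, gmtFamGraph, SimpleGraph.fromRel_adj,
            gmtRel, gmtExtra, ne_eq, Sum.inl.injEq, Sum.inr.injEq, Prod.mk.injEq,
            false_or, or_false, and_false, false_and, not_and] at hw
        · -- w = CV j x'
          have hij : i = j := by rcases hw.2 with h | h; exact h; exact h.symm
          subst hij
          refine Or.inl (Or.inl (Or.inl ⟨x', ?_, rfl⟩))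
          intro hc
          exact hw.1 rfl (Set.mem_singleton_iff.mp hc).symm
        · -- w = IV j y
          rcases hw.2 with h | ⟨h1, h2⟩
          · subst h
            exact Or.inl (Or.inl (Or.inr ⟨y, Set.mem_univ y, rfl⟩))
          · refine Or.inl (Or.inr ⟨j, h1, ?_⟩)
            rw [h2]; rfl
        · -- w = IV' j y (extra edge)
          obtain ⟨-, h1, -, h3⟩ := hw.2
          subst h1; subst h3
          exact Or.inr rfl
      have h1 : A1.ncard ≤ q - 2 := by
        calc A1.ncard ≤ ({x}ᶜ : Set (Fin (q - 1))).ncard := Set.ncard_image_le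
          _ = q - 1 - 1 := aux_ncard_compl_singleton x
          _ ≤ q - 2 := by omega
      have h2 : B2.ncard ≤ t := by
        calc B2.ncard ≤ (Set.univ : Set (Fin t)).ncard := Set.ncard_image_le
          _ = t := aux_ncard_univ_fin t
      have h3 : A3.ncard ≤ 1 := by
        apply aux_ncard_le_one
        rintro w1 ⟨j1, hj1, rfl⟩ w2 ⟨j2, hj2, rfl⟩
        have : j1 = j2 := Fin.ext (by omega)
        rw [this]
      have h4 : A4.ncard ≤ 1 := le_of_eq (Set.ncard_singleton _)
      have hle := Set.ncard_le_ncard hsub (Set.toFinite _)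
      have hu := Set.ncard_union_le (A1 ∪ B2 ∪ A3) A4
      have hu2 := Set.ncard_union_le (A1 ∪ B2) A3
      have hu3 := Set.ncard_union_le A1 B2
      have : ((gmtFamGraph m q t blk f g xf yf S).neighborSet (Sum.inl (i, x))).ncard ≤
          q + t := by omega
      exact le_trans this (le_max_left _ _)
    · -- v in C_i'
      set A1 : Set (Vmt m q t) := (fun x' => CV' i x') '' {x}ᶜ with hA1def
      set B2 : Set (Vmt m q t) := (fun y => IV' i y) '' Set.univ with hB2def
      set A3 : Set (Vmt m q t) :=
        {w | ∃ j : Fin m, (j : ℕ) + 1 = (i : ℕ) ∧ w = IV' j (blk true i x)} with hA3def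
      have hsub : (gmtFamGraph m q t blk f g xf yf S).neighborSet
          (Sum.inr (Sum.inl (i, x))) ⊆ A1 ∪ B2 ∪ A3 := by
        intro w hw
        rcases w with ⟨j, x'⟩ | ⟨⟨j, x'⟩ | ⟨⟨j, y⟩ | ⟨⟨j, y⟩ | j⟩⟩⟩ <;>
          simp only [SimpleGraph.mem_neighborSet, gmtFamGraph, SimpleGraph.fromRel_adj,
            gmtRel, gmtExtra, ne_eq, Sum.inl.injEq, Sum.inr.injEq, Prod.mk.injEq,
            false_or, or_false, and_false, false_and, not_and] at hw
        · -- w = CV' j x'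
          have hij : i = j := by rcases hw.2 with h | h; exact h; exact h.symm
          subst hij
          refine Or.inl (Or.inl ⟨x', ?_, rfl⟩)
          intro hc
          exact hw.1 rfl (Set.mem_singleton_iff.mp hc).symm
        · -- w = IV' j y
          rcases hw.2 with h | ⟨h1, h2⟩
          · subst h
            exact Or.inl (Or.inr ⟨y, Set.mem_univ y, rfl⟩)
          · refine Or.inr ⟨j, h1, ?_⟩
            rw [h2]; rfl
      have h1 : A1.ncard ≤ q - 2 := by
        calc A1.ncard ≤ ({x}ᶜ : Set (Fin (q - 1))).ncard := Set.ncard_image_le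
          _ = q - 1 - 1 := aux_ncard_compl_singleton x
          _ ≤ q - 2 := by omega
      have h2 : B2.ncard ≤ t := by
        calc B2.ncard ≤ (Set.univ : Set (Fin t)).ncard := Set.ncard_image_le
          _ = t := aux_ncard_univ_fin t
      have h3 : A3.ncard ≤ 1 := by
        apply aux_ncard_le_one
        rintro w1 ⟨j1, hj1, rfl⟩ w2 ⟨j2, hj2, rfl⟩
        have : j1 = j2 := Fin.ext (by omega)
        rw [this]
      have hle := Set.ncard_le_ncard hsub (Set.toFinite _)
      have hu := Set.ncard_union_le (A1 ∪ B2) A3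
      have hu2 := Set.ncard_union_le A1 B2
      have : ((gmtFamGraph m q t blk f g xf yf S).neighborSet
          (Sum.inr (Sum.inl (i, x)))).ncard ≤ q + t := by omega
      exact le_trans this (le_max_left _ _)
    · -- v in I_i
      set A1 : Set (Vmt m q t) := (fun x => CV i x) '' Set.univ with hA1def
      set A2 : Set (Vmt m q t) :=
        {w | ∃ (jj : Fin m) (xx : Fin (q - 1)),
          (i : ℕ) + 1 = (jj : ℕ) ∧ blk false jj xx = y ∧ w = CV jj xx} with hA2def
      set A3 : Set (Vmt m q t) := {SV i} with hA3def
      have hsub : (gmtFamGraph m q t blk f g xf yf S).neighborSet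
          (Sum.inr (Sum.inr (Sum.inl (i, y)))) ⊆ A1 ∪ A2 ∪ A3 := by
        intro w hw
        rcases w with ⟨j, x'⟩ | ⟨⟨j, x'⟩ | ⟨⟨j, y'⟩ | ⟨⟨j, y'⟩ | j⟩⟩⟩ <;>
          simp only [SimpleGraph.mem_neighborSet, gmtFamGraph, SimpleGraph.fromRel_adj,
            gmtRel, gmtExtra, ne_eq, Sum.inl.injEq, Sum.inr.injEq, Prod.mk.injEq,
            false_or, or_false, and_false, false_and, not_and] at hw
        · -- w = CV j x'
          rcases hw.2 with h | ⟨h1, h2⟩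
          · subst h
            exact Or.inl (Or.inl ⟨x', Set.mem_univ x', rfl⟩)
          · exact Or.inl (Or.inr ⟨j, x', h1, h2, rfl⟩)
        · -- w = SV j
          obtain ⟨h1, -⟩ := hw.2
          subst h1
          exact Or.inr rfl
      have h1 : A1.ncard ≤ q - 1 := by
        calc A1.ncard ≤ (Set.univ : Set (Fin (q - 1))).ncard := Set.ncard_image_le
          _ = q - 1 := aux_ncard_univ_fin _
      have h2 : A2.ncard ≤ (q - 1 + t - 1) / t := by
        apply hA2
        intro j₁ j₂ x₁ x₂ h
        simp only [CV, Sum.inl.injEq, Prod.mk.injEq] at h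
        exact h.1
      have h3 : A3.ncard ≤ 1 := le_of_eq (Set.ncard_singleton _)
      have hle := Set.ncard_le_ncard hsub (Set.toFinite _)
      have hu := Set.ncard_union_le (A1 ∪ A2) A3
      have hu2 := Set.ncard_union_le A1 A2
      have : ((gmtFamGraph m q t blk f g xf yf S).neighborSet
          (Sum.inr (Sum.inr (Sum.inl (i, y))))).ncard ≤
          q + (q - 1 + t - 1) / t + 1 := by omega
      exact le_trans this (le_max_right _ _)
    · -- v in I_i'
      set A1 : Set (Vmt m q t) := (fun x => CV' i x) '' Set.univ with hA1def
      set A2 : Set (Vmt m q t) :=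
        {w | ∃ (jj : Fin m) (xx : Fin (q - 1)),
          (i : ℕ) + 1 = (jj : ℕ) ∧ blk true jj xx = y ∧ w = CV' jj xx} with hA2def
      set A3 : Set (Vmt m q t) := {SV i} with hA3def
      set A4 : Set (Vmt m q t) := {CV i (xf i)} with hA4def
      have hsub : (gmtFamGraph m q t blk f g xf yf S).neighborSet
          (Sum.inr (Sum.inr (Sum.inr (Sum.inl (i, y))))) ⊆ A1 ∪ A2 ∪ A3 ∪ A4 := by
        intro w hw
        rcases w with ⟨j, x'⟩ | ⟨⟨j, x'⟩ | ⟨⟨j, y'⟩ | ⟨⟨j, y'⟩ | j⟩⟩⟩ <;>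
          simp only [SimpleGraph.mem_neighborSet, gmtFamGraph, SimpleGraph.fromRel_adj,
            gmtRel, gmtExtra, ne_eq, Sum.inl.injEq, Sum.inr.injEq, Prod.mk.injEq,
            false_or, or_false, and_false, false_and, not_and] at hw
        · -- w = CV j x' (extra edge)
          obtain ⟨-, h1, h2, -⟩ := hw.2
          subst h1; subst h2
          exact Or.inr rfl
        · -- w = CV' j x'
          rcases hw.2 with h | ⟨h1, h2⟩
          · subst h
            exact Or.inl (Or.inl (Or.inl ⟨x', Set.mem_univ x', rfl⟩))
          · exact Or.inl (Or.inl (Or.inr ⟨j, x', h1, h2, rfl⟩))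
        · -- w = SV j
          obtain ⟨h1, -⟩ := hw.2
          subst h1
          exact Or.inl (Or.inr rfl)
      have h1 : A1.ncard ≤ q - 1 := by
        calc A1.ncard ≤ (Set.univ : Set (Fin (q - 1))).ncard := Set.ncard_image_le
          _ = q - 1 := aux_ncard_univ_fin _
      have h2 : A2.ncard ≤ (q - 1 + t - 1) / t := by
        apply hA2
        intro j₁ j₂ x₁ x₂ h
        simp only [CV', Sum.inr.injEq, Sum.inl.injEq, Prod.mk.injEq] at h
        exact h.1
      have h3 : A3.ncard ≤ 1 := le_of_eq (Set.ncard_singleton _)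
      have h4 : A4.ncard ≤ 1 := le_of_eq (Set.ncard_singleton _)
      have hle := Set.ncard_le_ncard hsub (Set.toFinite _)
      have hu := Set.ncard_union_le (A1 ∪ A2 ∪ A3) A4
      have hu2 := Set.ncard_union_le (A1 ∪ A2) A3
      have hu3 := Set.ncard_union_le A1 A2
      have : ((gmtFamGraph m q t blk f g xf yf S).neighborSet
          (Sum.inr (Sum.inr (Sum.inr (Sum.inl (i, y)))))).ncard ≤
          q + (q - 1 + t - 1) / t + 1 := by omega
      exact le_trans this (le_max_right _ _)
    · -- v = s_i
      set A1 : Set (Vmt m q t) := {IV i (f i)} with hA1def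
      set A2 : Set (Vmt m q t) := {IV' i (g i)} with hA2def
      have hsub : (gmtFamGraph m q t blk f g xf yf S).neighborSet
          (Sum.inr (Sum.inr (Sum.inr (Sum.inr i)))) ⊆ A1 ∪ A2 := by
        intro w hw
        rcases w with ⟨j, x'⟩ | ⟨⟨j, x'⟩ | ⟨⟨j, y'⟩ | ⟨⟨j, y'⟩ | j⟩⟩⟩ <;>
          simp only [SimpleGraph.mem_neighborSet, gmtFamGraph, SimpleGraph.fromRel_adj,
            gmtRel, gmtExtra, ne_eq, Sum.inl.injEq, Sum.inr.injEq, Prod.mk.injEq,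
            false_or, or_false, and_false, false_and, not_and] at hw
        · -- w = IV j y'
          obtain ⟨h1, h2⟩ := hw.2
          subst h1; subst h2
          exact Or.inl rfl
        · -- w = IV' j y'
          obtain ⟨h1, h2⟩ := hw.2
          subst h1; subst h2
          exact Or.inr rfl
      have h1 : A1.ncard ≤ 1 := le_of_eq (Set.ncard_singleton _)
      have h2 : A2.ncard ≤ 1 := le_of_eq (Set.ncard_singleton _)
      have hle := Set.ncard_le_ncard hsub (Set.toFinite _)
      have hu := Set.ncard_union_le A1 A2
      have : ((gmtFamGraph m q t blk f g xf yf S).neighborSet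
          (Sum.inr (Sum.inr (Sum.inr (Sum.inr i))))).ncard ≤ q + t := by omega
      exact le_trans this (le_max_left _ _)
  refine ⟨hcard, hmain, fun hqt v => ?_⟩
  refine le_trans (hmain v) (max_le (by omega) ?_)
  have hlt : (q - 1 + t - 1) / t < t + 1 := by
    rw [Nat.div_lt_iff_lt_mul (by omega : 0 < t)]
    have h2 : (t + 1) * t = t * t + t := by ring
    rw [h2]
    generalize t * t = u at hqt ⊢
    omega
  omega
end

section
/- Let H be a constraint graph with a hard constraint {i,j} (i.e., {i,j} not an edge of H), and let G=(V,E) be an H-colorable graph on n vertices. Suppose that for every nonadjacent pair u, v of G, a uniformly random H-coloring assigns colors i to u and j to v with probability at least delta > 0. Given L >= (8/delta) log(n^2/(2 epsilon)) independent uniform H-colorings, the algorithm that declares {u,v} a non-edge iff some sample assigns i to u and j to v (and otherwise adds {u,v} to E_hat) outputs E_hat = E with probability at least 1 - epsilon. -/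
/-- The graph output by the algorithm `structlearn-H` on samples `x`: the pair `{u,v}`
is declared a non-edge iff some sample assigns the incompatible colors `i, j` to `u, v`. -/
def learnedGraph {q L : ℕ} {V : Type} (i j : Fin q) (x : Fin L → (V → Fin q)) :
    SimpleGraph V :=
  SimpleGraph.fromRel (fun u v =>
    ¬ ∃ k : Fin L, (x k u = i ∧ x k v = j) ∨ (x k u = j ∧ x k v = i))

lemma aux_ncard_forall_mem {ι α : Type*} [Fintype ι] [Finite α] (S : Set α) :
    {x : ι → α | ∀ k, x k ∈ S}.ncard = S.ncard ^ Fintype.card ι := by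
  have h : {x : ι → α | ∀ k, x k ∈ S} = Set.pi Set.univ fun _ => S := by
    ext x; simp [Set.mem_pi]
  rw [h, ← Nat.card_coe_set_eq, Nat.card_congr (Equiv.Set.univPi _), Nat.card_pi]
  simp [Nat.card_coe_set_eq]

lemma aux_ncard_biUnion_le {ι α : Type*} [Finite α] (s : Finset ι) (t : ι → Set α) :
    (⋃ i ∈ s, t i).ncard ≤ ∑ i ∈ s, (t i).ncard := by
  classical
  induction s using Finset.induction_on with
  | empty => simp
  | insert _ _ h ih =>
      rw [Finset.set_biUnion_insert, Finset.sum_insert h]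
      exact (Set.ncard_union_le _ _).trans (by omega)

/-- A sample hits the pair (u,v) with the incompatible colors (in either order). -/
def hitP {q : ℕ} {V : Type} (i j : Fin q) (u v : V) (σ : V → Fin q) : Prop :=
  (σ u = i ∧ σ v = j) ∨ (σ u = j ∧ σ v = i)

lemma aux_learned_char {q L : ℕ} {V : Type} (H : Fin q → Fin q → Prop)
    (hsymm : Symmetric H) (i j : Fin q) (hij : ¬ H i j) (G : SimpleGraph V)
    (x : Fin L → (V → Fin q)) (hx : ∀ k, IsHColoring H G (x k)) :
    learnedGraph i j x = G ↔
      ∀ u v : V, u ≠ v → ¬ G.Adj u v → ∃ k, hitP i j u v (x k) := by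
  have hnohit : ∀ k, ∀ u v : V, G.Adj u v → ¬ hitP i j u v (x k) := by
    intro k u v hadj hh
    have hH := hx k u v hadj
    rcases hh with ⟨h1, h2⟩ | ⟨h1, h2⟩
    · rw [h1, h2] at hH; exact hij hH
    · rw [h1, h2] at hH; exact hij (hsymm hH)
  constructor
  · intro heq u v huv hnadj
    by_contra hno
    push_neg at hno
    have hadj : (learnedGraph i j x).Adj u v := by
      rw [learnedGraph, SimpleGraph.fromRel_adj]
      exact ⟨huv, Or.inl (fun ⟨k, hk⟩ => hno k hk)⟩
    rw [heq] at hadj; exact hnadj hadj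
  · intro hall
    ext u v
    rw [learnedGraph, SimpleGraph.fromRel_adj]
    constructor
    · rintro ⟨huv, hor⟩
      by_contra hnadj
      rcases hall u v huv hnadj with ⟨k, hk⟩
      rcases hor with h | h
      · exact h ⟨k, hk⟩
      · rcases hk with ⟨h1, h2⟩ | ⟨h1, h2⟩
        · exact h ⟨k, Or.inr ⟨h2, h1⟩⟩
        · exact h ⟨k, Or.inl ⟨h2, h1⟩⟩
    · intro hadj
      exact ⟨hadj.ne, Or.inl (fun ⟨k, hk⟩ => hnohit k u v hadj hk)⟩

set_option maxHeartbeats 2000000 in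
/-- Correctness of `structlearn-H`: if every nonadjacent pair receives the incompatible
pair `(i,j)` with probability at least `δ` under a uniform `H`-coloring, and
`L ≥ (8/δ) log(n²/(2ε))`, then the fraction of sample sequences (of `L` i.i.d. uniform
`H`-colorings of `G`) on which the algorithm outputs exactly `G` is at least `1 - ε`. -/
theorem stmt14 (q L : ℕ) (H : Fin q → Fin q → Prop) (hsymm : Symmetric H)
    (i j : Fin q) (hij : ¬ H i j)
    (V : Type) [Fintype V] [DecidableEq V] (G : SimpleGraph V)
    (hcol : ∃ σ, IsHColoring H G σ)
    (δ ε : ℝ) (hδ : 0 < δ) (hε : 0 < ε) (hε1 : ε < 1)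
    (hpair : ∀ u v : V, u ≠ v → ¬ G.Adj u v →
      ({σ : V → Fin q | IsHColoring H G σ ∧ σ u = i ∧ σ v = j}.ncard : ℝ) ≥
        δ * ({σ : V → Fin q | IsHColoring H G σ}.ncard : ℝ))
    (hL : (L : ℝ) ≥ (8 / δ) * Real.log ((Fintype.card V : ℝ) ^ 2 / (2 * ε))) :
    ({x : Fin L → (V → Fin q) |
        (∀ k, IsHColoring H G (x k)) ∧ learnedGraph i j x = G}.ncard : ℝ) ≥
      (1 - ε) * ({σ : V → Fin q | IsHColoring H G σ}.ncard : ℝ) ^ L := by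
  classical
  set S : Set (V → Fin q) := {σ | IsHColoring H G σ} with hSdef
  set N : ℕ := S.ncard with hNdef
  obtain ⟨σ₀, hσ₀⟩ := hcol
  have hN1 : 1 ≤ N := by
    have h := (Set.ncard_pos (Set.toFinite S)).mpr ⟨σ₀, hσ₀⟩
    omega
  have hNpos : (0:ℝ) < (N:ℝ) := by exact_mod_cast hN1
  -- total and bad sets
  set Tot : Set (Fin L → (V → Fin q)) := {x | ∀ k, x k ∈ S} with hTotdef
  set Bad : Set (Fin L → (V → Fin q)) :=
    {x | (∀ k, x k ∈ S) ∧ ∃ u v : V, u ≠ v ∧ ¬ G.Adj u v ∧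
      ∀ k, ¬ hitP i j u v (x k)} with hBaddef
  have hTotcard : Tot.ncard = N ^ L := by
    rw [hTotdef, aux_ncard_forall_mem S, Fintype.card_fin]
  have hBadTot : Bad ⊆ Tot := fun x hx => hx.1
  have hTarget : {x : Fin L → (V → Fin q) |
      (∀ k, IsHColoring H G (x k)) ∧ learnedGraph i j x = G} = Tot \ Bad := by
    ext x
    simp only [Set.mem_setOf_eq, Set.mem_diff, hTotdef, hBaddef]
    constructor
    · rintro ⟨h1, h2⟩
      refine ⟨h1, ?_⟩
      rintro ⟨-, u, v, huv, hnadj, hno⟩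
      obtain ⟨k, hk⟩ := (aux_learned_char H hsymm i j hij G x h1).mp h2 u v huv hnadj
      exact hno k hk
    · rintro ⟨h1, h2⟩
      refine ⟨h1, (aux_learned_char H hsymm i j hij G x h1).mpr ?_⟩
      intro u v huv hnadj
      by_contra hno
      push_neg at hno
      exact h2 ⟨h1, u, v, huv, hnadj, hno⟩
  have hTargetcard : ({x : Fin L → (V → Fin q) |
      (∀ k, IsHColoring H G (x k)) ∧ learnedGraph i j x = G}.ncard : ℝ)
      = (N:ℝ) ^ L - (Bad.ncard : ℝ) := by
    rw [hTarget, Set.ncard_diff hBadTot]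
    rw [Nat.cast_sub (Set.ncard_le_ncard hBadTot (Set.toFinite _)), hTotcard]
    push_cast; ring
  rw [hTargetcard]
  -- suffices to bound Bad
  suffices hBadBound : (Bad.ncard : ℝ) ≤ ε * (N:ℝ) ^ L by
    nlinarith [pow_nonneg (le_of_lt hNpos) L]
  by_cases hpairs : ∃ u v : V, u ≠ v ∧ ¬ G.Adj u v
  case neg =>
    have : Bad = ∅ := by
      ext x
      simp only [hBaddef, Set.mem_setOf_eq, Set.mem_empty_iff_false, iff_false]
      rintro ⟨-, u, v, huv, hnadj, -⟩
      exact hpairs ⟨u, v, huv, hnadj⟩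
    rw [this]
    simp only [Set.ncard_empty, Nat.cast_zero]
    positivity
  case pos =>
  obtain ⟨u₀, v₀, hu₀v₀, hnadj₀⟩ := hpairs
  -- δ ≤ 1
  have hδ1 : δ ≤ 1 := by
    have h1 := hpair u₀ v₀ hu₀v₀ hnadj₀
    have h2 : {σ : V → Fin q | IsHColoring H G σ ∧ σ u₀ = i ∧ σ v₀ = j}.ncard ≤ N :=
      Set.ncard_le_ncard (fun σ hσ => hσ.1) (Set.toFinite _)
    have h2' : ({σ : V → Fin q | IsHColoring H G σ ∧ σ u₀ = i ∧ σ v₀ = j}.ncard : ℝ) ≤ (N:ℝ) := by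
      exact_mod_cast h2
    nlinarith
  -- n ≥ 2
  have hn2 : (2:ℝ) ≤ (Fintype.card V : ℝ) := by
    have : 1 < Fintype.card V := Fintype.one_lt_card_iff.mpr ⟨u₀, v₀, hu₀v₀⟩
    exact_mod_cast this
  set n : ℝ := (Fintype.card V : ℝ) with hndef
  -- per-pair bound
  have hBpair : ∀ u v : V, u ≠ v → ¬ G.Adj u v →
      (({x : Fin L → (V → Fin q) | ∀ k, x k ∈ S ∩ {σ | ¬ hitP i j u v σ}}.ncard : ℝ))
        ≤ ((1 - δ) * (N:ℝ)) ^ L := by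
    intro u v huv hnadj
    rw [aux_ncard_forall_mem, Fintype.card_fin]
    push_cast
    apply pow_le_pow_left₀ (by positivity)
    set A : Set (V → Fin q) := {σ | IsHColoring H G σ ∧ σ u = i ∧ σ v = j} with hAdef
    have hAS : A ⊆ S := fun σ hσ => hσ.1
    have hsub : S ∩ {σ | ¬ hitP i j u v σ} ⊆ S \ A := by
      rintro σ ⟨hσS, hσh⟩
      exact ⟨hσS, fun hσA => hσh (Or.inl ⟨hσA.2.1, hσA.2.2⟩)⟩
    have h1 : (S ∩ {σ | ¬ hitP i j u v σ}).ncard ≤ (S \ A).ncard :=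
      Set.ncard_le_ncard hsub (Set.toFinite _)
    have h2 : (S \ A).ncard = N - A.ncard := Set.ncard_diff hAS
    have h3 : A.ncard ≤ N := Set.ncard_le_ncard hAS (Set.toFinite _)
    have h4 : ((S ∩ {σ | ¬ hitP i j u v σ}).ncard : ℝ) ≤ (N:ℝ) - (A.ncard : ℝ) := by
      rw [← Nat.cast_sub h3]
      exact_mod_cast h1.trans_eq h2
    have h5 : (A.ncard : ℝ) ≥ δ * (N:ℝ) := hpair u v huv hnadj
    linarith
  -- union bound
  set C : V × V → Set (Fin L → (V → Fin q)) := fun p =>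
    if p.1 ≠ p.2 ∧ ¬ G.Adj p.1 p.2 then
      {x | ∀ k, x k ∈ S ∩ {σ | ¬ hitP i j p.1 p.2 σ}} else ∅ with hCdef
  have hBadsub : Bad ⊆ ⋃ p ∈ (Finset.univ : Finset (V × V)), C p := by
    rintro x ⟨hxS, u, v, huv, hnadj, hno⟩
    refine Set.mem_biUnion (Finset.mem_univ (u, v)) ?_
    rw [hCdef]
    simp only [if_pos (⟨huv, hnadj⟩ : u ≠ v ∧ ¬ G.Adj u v)]
    exact fun k => ⟨hxS k, hno k⟩
  have hBad1 : (Bad.ncard : ℝ) ≤ ∑ p : V × V, ((C p).ncard : ℝ) := by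
    have := (Set.ncard_le_ncard hBadsub (Set.toFinite _)).trans
      (aux_ncard_biUnion_le Finset.univ C)
    exact_mod_cast this
  have hBad2 : (Bad.ncard : ℝ) ≤ n ^ 2 * ((1 - δ) * (N:ℝ)) ^ L := by
    refine hBad1.trans ?_
    have hterm : ∀ p : V × V, ((C p).ncard : ℝ) ≤ ((1 - δ) * (N:ℝ)) ^ L := by
      intro p
      by_cases hp : p.1 ≠ p.2 ∧ ¬ G.Adj p.1 p.2
      · have hCp : C p = {x | ∀ k, x k ∈ S ∩ {σ | ¬ hitP i j p.1 p.2 σ}} := by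
          simp only [hCdef]; rw [if_pos hp]
        rw [hCp]; exact hBpair p.1 p.2 hp.1 hp.2
      · have hCp : C p = ∅ := by simp only [hCdef]; rw [if_neg hp]
        rw [hCp]; simp only [Set.ncard_empty, Nat.cast_zero]
        exact pow_nonneg (mul_nonneg (by linarith) (le_of_lt hNpos)) L
    calc ∑ p : V × V, ((C p).ncard : ℝ) ≤ ∑ _p : V × V, ((1 - δ) * (N:ℝ)) ^ L :=
          Finset.sum_le_sum (fun p _ => hterm p)
      _ = n ^ 2 * ((1 - δ) * (N:ℝ)) ^ L := by
          rw [Finset.sum_const, Finset.card_univ, Fintype.card_prod, hndef]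
          push_cast; ring
  -- analysis: n^2 * (1-δ)^L ≤ ε
  have hc1 : (1:ℝ) < n ^ 2 / (2 * ε) := by
    rw [lt_div_iff₀ (by linarith)]
    nlinarith
  have hcpos : (0:ℝ) < n ^ 2 / (2 * ε) := by linarith
  have hlogpos : 0 ≤ Real.log (n ^ 2 / (2 * ε)) := Real.log_nonneg (le_of_lt hc1)
  have hδL : δ * (L:ℝ) ≥ 8 * Real.log (n ^ 2 / (2 * ε)) := by
    have := mul_le_mul_of_nonneg_left hL (le_of_lt hδ)
    calc 8 * Real.log (n ^ 2 / (2 * ε)) = δ * ((8 / δ) * Real.log (n ^ 2 / (2 * ε))) := by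
          field_simp
      _ ≤ δ * (L:ℝ) := this
  have hexp : ((1 - δ):ℝ) ^ L ≤ (2 * ε / n ^ 2) ^ 2 := by
    have h1 : ((1 - δ):ℝ) ^ L ≤ Real.exp (-δ) ^ L :=
      pow_le_pow_left₀ (by linarith) (by linarith [Real.add_one_le_exp (-δ)]) L
    have h2 : Real.exp (-δ) ^ L = Real.exp (-(δ * (L:ℝ))) := by
      rw [← Real.exp_nat_mul]; ring_nf
    have h3 : Real.exp (-(δ * (L:ℝ))) ≤ Real.exp (-(2 * Real.log (n ^ 2 / (2 * ε)))) := by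
      apply Real.exp_le_exp.mpr; linarith
    have h4 : Real.exp (-(2 * Real.log (n ^ 2 / (2 * ε)))) = (2 * ε / n ^ 2) ^ 2 := by
      have hinv : Real.exp (-Real.log (n ^ 2 / (2 * ε))) = 2 * ε / n ^ 2 := by
        rw [Real.exp_neg, Real.exp_log hcpos, inv_div]
      rw [show -(2 * Real.log (n ^ 2 / (2 * ε)))
            = -Real.log (n ^ 2 / (2 * ε)) + -Real.log (n ^ 2 / (2 * ε)) by ring,
        Real.exp_add, hinv]
      ring
    calc ((1 - δ):ℝ) ^ L ≤ Real.exp (-(δ * (L:ℝ))) := h2 ▸ h1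
      _ ≤ _ := h3
      _ = _ := h4
  have hfinal : n ^ 2 * ((1 - δ):ℝ) ^ L ≤ ε := by
    have h5 : n ^ 2 * ((1 - δ):ℝ) ^ L ≤ n ^ 2 * (2 * ε / n ^ 2) ^ 2 :=
      mul_le_mul_of_nonneg_left hexp (by positivity)
    have h6 : n ^ 2 * (2 * ε / n ^ 2) ^ 2 = 4 * ε ^ 2 / n ^ 2 := by
      field_simp; ring
    have hn4 : (4:ℝ) ≤ n ^ 2 := by nlinarith
    have h7 : 4 * ε ^ 2 / n ^ 2 ≤ ε ^ 2 := by
      rw [div_le_iff₀ (by positivity)]; nlinarith [sq_nonneg ε]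
    nlinarith
  refine hBad2.trans ?_
  rw [mul_pow, ← mul_assoc]
  exact mul_le_mul_of_nonneg_right hfinal (pow_nonneg (le_of_lt hNpos) L)
end
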